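/- arXiv:2302.03643 — 5 statements merged into one kernel-verified Lean document; each statement's English description precedes it below -/
import Mathlib

section
/- Perform Schensted insertion (with decreasing rows and columns) of the values w(n), w(n−1), ..., w(1), in that order, into an initially empty partial tableau. For each r ∈ [n]: if w(r) is appended to the end of row one (bumps nothing), then row r of snow(RD(w)) contains no dark cloud; if w(r) bumps value c from row one, then (r,c) is a dark cloud of snow(RD(w)). -/
open scoped Classical

noncomputable section

/-- A weak composition: a finitely supported sequence of naturals.  Indices are
thought of as positive integers; index `0` is required to satisfy `α 0 = 0`. -/
abbrev WeakComp := ℕ →₀ ℕ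

/-- A weak composition is snowy if its positive entries are pairwise distinct. -/
def Snowy (α : WeakComp) : Prop :=
  ∀ r r', 0 < α r → α r = α r' → r = r'

/-- The key diagram of a weak composition: the left-justified diagram with
`α r` cells in row `r` (columns `1, …, α r`). -/
def keyDiagram (α : WeakComp) : Finset (ℕ × ℕ) :=
  α.support.biUnion fun r => (Finset.Icc 1 (α r)).image fun c => (r, c)

/-- Largest row index occurring in a diagram. -/
def rowBound (D : Finset (ℕ × ℕ)) : ℕ := (D.image Prod.fst).sup id

/-- One step of the snow-diagram algorithm: in row `r`, mark as a dark cloud the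
rightmost cell of `D` whose column contains no dark cloud of `S` yet. -/
def darkStep (D S : Finset (ℕ × ℕ)) (r : ℕ) : Finset (ℕ × ℕ) :=
  let cols := (D.filter fun p => p.1 = r ∧ ∀ q ∈ S, q.2 ≠ p.2).image Prod.snd
  if h : cols.Nonempty then insert (r, cols.max' h) S else S

/-- Process rows `N, N-1, …, N-k+1` from bottom to top. -/
def darkAux (D : Finset (ℕ × ℕ)) (N : ℕ) : ℕ → Finset (ℕ × ℕ)
  | 0 => ∅
  | k + 1 => darkStep D (darkAux D N k) (N - k)

/-- The dark cloud diagram of a diagram `D`: iterate the rows of `D` from bottom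
to top, marking in each row the rightmost cell whose column contains no dark
cloud from a lower row. -/
def dark (D : Finset (ℕ × ℕ)) : Finset (ℕ × ℕ) := darkAux D (rowBound D) (rowBound D)

/-- The underlying diagram of the snow diagram of `D`: the cells of `D` together
with all (snowflake) positions above a dark cloud in its column. -/
def snow (D : Finset (ℕ × ℕ)) : Finset (ℕ × ℕ) :=
  D ∪ (dark D).biUnion fun p => (Finset.Icc 1 p.1).image fun r => (r, p.2)

/-- `rajcode` of a diagram: the number of cells in row `r` of its snow diagram. -/
def rajcodeD (D : Finset (ℕ × ℕ)) (r : ℕ) : ℕ :=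
  ((snow D).filter fun p => p.1 = r).card

/-- `raj` of a diagram: the total number of cells of its snow diagram. -/
def rajD (D : Finset (ℕ × ℕ)) : ℕ := (snow D).card

/-- `rajcode` of a weak composition. -/
def rajcode (α : WeakComp) (r : ℕ) : ℕ := rajcodeD (keyDiagram α) r

/-- `raj` of a weak composition. -/
def raj (α : WeakComp) : ℕ := rajD (keyDiagram α)

/-- Non-attacking rook diagram: a finite subset of `ℤ_{>0} × ℤ_{>0}` with at
most one cell in each row and at most one cell in each column. -/
def IsRook (R : Finset (ℕ × ℕ)) : Prop :=
  (∀ p ∈ R, 1 ≤ p.1 ∧ 1 ≤ p.2) ∧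
    ∀ p ∈ R, ∀ q ∈ R, (p.1 = q.1 ∨ p.2 = q.2) → p = q

/-- The sum `|α|` of the entries of a weak composition. -/
def wsum (α : WeakComp) : ℕ := α.sum fun _ v => v

/-- The number of pairs `(r, r')` with `1 ≤ r < r'` and `α r < α r'`. -/
def invCount (α : WeakComp) : ℕ :=
  ((Finset.Icc 1 (α.support.sup id) ×ˢ α.support).filter fun p =>
      p.1 < p.2 ∧ α p.1 < α p.2).card

/-- Swap entries `i` and `i+1` of a weak composition. -/
def swapEntries (i : ℕ) (α : WeakComp) : WeakComp :=
  Finsupp.equivMapDomain (Equiv.swap i (i + 1)) α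

/-- The Rothe diagram of `w ∈ S_n`, in 1-based coordinates:
`{(r, w(r')) : r < r', w(r) > w(r')}`. -/
def rothe {n : ℕ} (w : Equiv.Perm (Fin n)) : Finset (ℕ × ℕ) :=
  (Finset.univ.filter fun p : Fin n × Fin n => p.1 < p.2 ∧ w p.2 < w p.1).image
    fun p => ((p.1 : ℕ) + 1, (w p.2 : ℕ) + 1)

/-- Length of the longest increasing subsequence of `w` starting at position `r`
(equivalently, starting with the value `w r`). -/
def LISfrom {n : ℕ} (w : Equiv.Perm (Fin n)) (r : Fin n) : ℕ :=
  Finset.sup (Finset.univ.filter fun s : Finset (Fin n) =>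
      r ∈ s ∧ (∀ i ∈ s, r ≤ i) ∧ ∀ i ∈ s, ∀ j ∈ s, i < j → w i < w j)
    Finset.card

/-- Insert `x` into a strictly decreasing row: replace the largest entry `< x`
(returning it as bumped), or append `x` at the end. -/
def insertRow : List ℕ → ℕ → List ℕ × Option ℕ
  | [], x => ([x], none)
  | a :: t, x =>
      if a < x then (x :: t, some a)
      else (a :: (insertRow t x).1, (insertRow t x).2)

/-- The 1-based value of `w` at 0-based position `i` (0 if out of range). -/
def oneline {n : ℕ} (w : Equiv.Perm (Fin n)) (i : ℕ) : ℕ :=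
  if h : i < n then (w ⟨i, h⟩ : ℕ) + 1 else 0

/-- Row one of the Schensted insertion tableau after the first `k` insertions of
the values `w(n), w(n-1), …` (1-based values, inserted from the last position). -/
def rowOneAux {n : ℕ} (w : Equiv.Perm (Fin n)) : ℕ → List ℕ
  | 0 => []
  | k + 1 => (insertRow (rowOneAux w k) (oneline w (n - 1 - k))).1

/-- The value bumped from row one when the value `w r` is inserted (during the
Schensted insertion of `w(n), …, w(1)` into the empty tableau); `none` if `w r`
is appended at the end of row one. -/
def bumpedFromRowOne {n : ℕ} (w : Equiv.Perm (Fin n)) (r : Fin n) : Option ℕ :=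
  (insertRow (rowOneAux w (n - 1 - (r : ℕ))) (oneline w (r : ℕ))).2

/-- Position `i` starts a maximal decreasing run of `u` (in one-line notation). -/
def IsRunStart {n : ℕ} (u : Equiv.Perm (Fin n)) (i : Fin n) : Prop :=
  ∀ j : Fin n, (j : ℕ) + 1 = (i : ℕ) → u j < u i

/-- A fireworks permutation: the initial elements of its maximal decreasing runs
are increasing. -/
def Fireworks {n : ℕ} (u : Equiv.Perm (Fin n)) : Prop :=
  ∀ i j : Fin n, IsRunStart u i → IsRunStart u j → i < j → u i < u j

/-- An inverse fireworks permutation. -/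
def InverseFireworks {n : ℕ} (w : Equiv.Perm (Fin n)) : Prop := Fireworks w⁻¹

/-- The `n`-th Bell number: the number of set partitions (equivalence relations)
of an `n`-element set. -/
def bell (n : ℕ) : ℕ := Nat.card (Setoid (Fin n))

/-- The staircase board `Stair_n = {(r,c) : 1 ≤ r ≤ n-1, 1 ≤ c ≤ n-r}`. -/
def stair (n : ℕ) : Finset (ℕ × ℕ) :=
  (Finset.Icc 1 n ×ˢ Finset.Icc 1 n).filter fun p => p.1 ≤ n - 1 ∧ p.2 ≤ n - p.1

/-- All cells weakly above a rook of `R` in its column, or weakly to the left of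
a rook of `R` in its row. -/
def hooks (R : Finset (ℕ × ℕ)) : Finset (ℕ × ℕ) :=
  R.biUnion fun p =>
    ((Finset.Icc 1 p.1).image fun r => (r, p.2)) ∪
      ((Finset.Icc 1 p.2).image fun c => (p.1, c))

/-- The Northwest number `NW(R)`. -/
def NW (R : Finset (ℕ × ℕ)) : ℕ := (hooks R).card

/-- The Garsia–Remmel statistic: the number of cells of `Stair_n` that are not
weakly above a rook in its column and not weakly to the left of a rook in its
row. -/
def GRcount (n : ℕ) (R : Finset (ℕ × ℕ)) : ℕ :=
  ((stair n).filter fun q =>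
      ¬ ∃ p ∈ R, (p.2 = q.2 ∧ q.1 ≤ p.1) ∨ (p.1 = q.1 ∧ q.2 ≤ p.2)).card

/-- Garsia–Remmel `q`-Stirling numbers of the second kind. -/
def qStirling : ℕ → ℕ → Polynomial ℤ
  | 0, 0 => 1
  | 0, _ + 1 => 0
  | _ + 1, 0 => 0
  | n + 1, k + 1 =>
      Polynomial.X ^ k * qStirling n k +
        (∑ i ∈ Finset.range (k + 1), Polynomial.X ^ i) * qStirling n (k + 1)

/-- The `q`-Bell polynomial `B_n(q) = Σ_{k=0}^n S_{n,k}(q)`. -/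
def qBell (n : ℕ) : Polynomial ℤ := ∑ k ∈ Finset.range (n + 1), qStirling n k

/-- Tail lexicographic order on exponent vectors: `γ < α` iff there is `k` with
`γ k < α k` and `γ j = α j` for all `j > k`. -/
def TailLt (γ α : ℕ →₀ ℕ) : Prop :=
  ∃ k, γ k < α k ∧ ∀ j, k < j → γ j = α j


section Aux

/-! ### insertRow lemmas -/

lemma insertRow_fst_mem {l : List ℕ} {x a : ℕ} (h : a ∈ (insertRow l x).1) : a = x ∨ a ∈ l := by
  induction l with
  | nil => simpa [insertRow] using h
  | cons b t ih =>
    by_cases hb : b < x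
    · simp only [insertRow, if_pos hb, List.mem_cons] at h
      rcases h with rfl | h
      · exact Or.inl rfl
      · exact Or.inr (List.mem_cons_of_mem _ h)
    · simp only [insertRow, if_neg hb, List.mem_cons] at h
      rcases h with rfl | h
      · exact Or.inr List.mem_cons_self
      · rcases ih h with rfl | h
        · exact Or.inl rfl
        · exact Or.inr (List.mem_cons_of_mem _ h)

lemma insertRow_self_mem (l : List ℕ) (x : ℕ) : x ∈ (insertRow l x).1 := by
  induction l with
  | nil => simp [insertRow]
  | cons b t ih =>
    by_cases hb : b < x
    · simp [insertRow, hb]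
    · simp only [insertRow, if_neg hb, List.mem_cons]
      exact Or.inr ih

lemma insertRow_none_eq {l : List ℕ} {x : ℕ} (h : (insertRow l x).2 = none) :
    (insertRow l x).1 = l ++ [x] ∧ ∀ a ∈ l, ¬ a < x := by
  induction l with
  | nil => simp [insertRow]
  | cons b t ih =>
    by_cases hb : b < x
    · simp [insertRow, hb] at h
    · simp only [insertRow, if_neg hb] at h ⊢
      obtain ⟨h1, h2⟩ := ih h
      refine ⟨by simp [h1], ?_⟩
      intro a ha
      rcases List.mem_cons.mp ha with rfl | ha
      · exact hb
      · exact h2 a ha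

lemma insertRow_some_spec {l : List ℕ} {x c : ℕ} (hs : l.Pairwise (· > ·))
    (h : (insertRow l x).2 = some c) :
    c ∈ l ∧ c < x ∧ (∀ a ∈ l, a < x → a ≤ c) ∧
      ∀ a, a ∈ (insertRow l x).1 ↔ a = x ∨ (a ∈ l ∧ a ≠ c) := by
  induction l with
  | nil => simp [insertRow] at h
  | cons b t ih =>
    obtain ⟨hbt, hts⟩ := List.pairwise_cons.mp hs
    by_cases hb : b < x
    · simp only [insertRow, if_pos hb, Option.some.injEq] at h
      subst h
      refine ⟨List.mem_cons_self, hb, ?_, ?_⟩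
      · intro a ha _
        rcases List.mem_cons.mp ha with rfl | ha
        · exact le_refl _
        · exact le_of_lt (hbt a ha)
      · intro a
        simp only [insertRow, if_pos hb, List.mem_cons]
        constructor
        · rintro (rfl | ha)
          · exact Or.inl rfl
          · exact Or.inr ⟨Or.inr ha, ne_of_lt (hbt a ha)⟩
        · rintro (rfl | ⟨(rfl | ha), hne⟩)
          · exact Or.inl rfl
          · exact absurd rfl hne
          · exact Or.inr ha
    · simp only [insertRow, if_neg hb] at h
      obtain ⟨hc1, hc2, hc3, hc4⟩ := ih hts h
      refine ⟨List.mem_cons_of_mem _ hc1, hc2, ?_, ?_⟩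
      · intro a ha hax
        rcases List.mem_cons.mp ha with rfl | ha
        · exact absurd hax hb
        · exact hc3 a ha hax
      · intro a
        simp only [insertRow, if_neg hb, List.mem_cons]
        constructor
        · rintro (rfl | ha)
          · refine Or.inr ⟨Or.inl rfl, ?_⟩
            intro hac; subst hac; exact hb hc2
          · rcases (hc4 a).mp ha with rfl | ⟨ha', hne⟩
            · exact Or.inl rfl
            · exact Or.inr ⟨Or.inr ha', hne⟩
        · rintro (rfl | ⟨(rfl | ha), hne⟩)
          · exact Or.inr ((hc4 a).mpr (Or.inl rfl))
          · exact Or.inl rfl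
          · exact Or.inr ((hc4 a).mpr (Or.inr ⟨ha, hne⟩))

lemma insertRow_sorted {l : List ℕ} {x : ℕ} (hs : l.Pairwise (· > ·)) (hx : x ∉ l) :
    (insertRow l x).1.Pairwise (· > ·) := by
  induction l with
  | nil => simp [insertRow]
  | cons b t ih =>
    obtain ⟨hbt, hts⟩ := List.pairwise_cons.mp hs
    by_cases hb : b < x
    · simp only [insertRow, if_pos hb]
      exact List.pairwise_cons.mpr ⟨fun a ha => lt_trans (hbt a ha) hb, hts⟩
    · simp only [insertRow, if_neg hb]
      refine List.pairwise_cons.mpr ⟨?_, ih hts (fun h => hx (List.mem_cons_of_mem _ h))⟩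
      intro a ha
      rcases insertRow_fst_mem ha with rfl | ha
      · exact lt_of_le_of_ne (le_of_not_gt hb) (fun h => hx (by simp [h]))
      · exact hbt a ha

/-! ### darkStep / darkAux lemmas -/

lemma darkStep_subset (D S : Finset (ℕ × ℕ)) (r : ℕ) : S ⊆ darkStep D S r := by
  simp only [darkStep]
  split
  · exact Finset.subset_insert _ _
  · exact Finset.Subset.refl _

lemma mem_darkStep {D S : Finset (ℕ × ℕ)} {r : ℕ} {p : ℕ × ℕ}
    (h : p ∈ darkStep D S r) : p ∈ S ∨ p.1 = r := by
  simp only [darkStep] at h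
  split at h
  · rcases Finset.mem_insert.mp h with rfl | h
    · exact Or.inr rfl
    · exact Or.inl h
  · exact Or.inl h

lemma darkAux_mono {D : Finset (ℕ × ℕ)} {N : ℕ} :
    ∀ {k m : ℕ}, k ≤ m → darkAux D N k ⊆ darkAux D N m := by
  intro k m h
  induction m with
  | zero => simpa [Nat.le_zero.mp h] using Finset.Subset.refl _
  | succ m ih =>
    rcases Nat.lt_or_ge k (m + 1) with h' | h'
    · exact (ih (Nat.lt_succ_iff.mp h')).trans (darkStep_subset _ _ _)
    · have : k = m + 1 := le_antisymm h h'
      subst this; exact Finset.Subset.refl _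

lemma darkAux_row {D : Finset (ℕ × ℕ)} {N : ℕ} :
    ∀ {k : ℕ} {p : ℕ × ℕ}, p ∈ darkAux D N k → N < p.1 + k := by
  intro k
  induction k with
  | zero => intro p hp; simp [darkAux] at hp
  | succ k ih =>
    intro p hp
    rcases mem_darkStep hp with h | h
    · exact lt_trans (ih h) (by omega)
    · omega

lemma darkAux_rev {D : Finset (ℕ × ℕ)} {N : ℕ} {k : ℕ} :
    ∀ {m : ℕ}, k ≤ m → ∀ {p : ℕ × ℕ}, p ∈ darkAux D N m → N - k < p.1 →
      p ∈ darkAux D N k := by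
  intro m hm
  induction m with
  | zero => intro p hp _; rw [Nat.le_zero.mp hm]; exact hp
  | succ m ih =>
    rcases Nat.lt_or_ge k (m + 1) with h' | h'
    · intro p hp hr
      have hkm := Nat.lt_succ_iff.mp h'
      rcases mem_darkStep hp with h | h
      · exact ih hkm h hr
      · exfalso; omega
    · have : k = m + 1 := le_antisymm hm h'
      subst this; intro p hp _; exact hp

lemma darkStep_empty {D S : Finset (ℕ × ℕ)} {N : ℕ} (h : ∀ c, (N, c) ∉ D) :
    darkStep D S N = S := by
  simp only [darkStep]
  rw [dif_neg]
  rintro ⟨v, hv⟩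
  simp only [Finset.mem_image, Finset.mem_filter] at hv
  obtain ⟨p, ⟨hpD, hp1, -⟩, -⟩ := hv
  exact h p.2 (by rwa [← hp1, Prod.mk.eta])

lemma darkAux_shift {D : Finset (ℕ × ℕ)} {N : ℕ} (h : ∀ c, (N + 1, c) ∉ D) :
    ∀ k, darkAux D (N + 1) (k + 1) = darkAux D N k := by
  intro k
  induction k with
  | zero => show darkStep D _ (N + 1 - 0) = _; exact darkStep_empty h
  | succ k ih =>
    show darkStep D (darkAux D (N + 1) (k + 1)) (N + 1 - (k + 1)) = _
    rw [ih]
    have : N + 1 - (k + 1) = N - k := by omega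
    rw [this]; rfl

lemma rowBound_spec {D : Finset (ℕ × ℕ)} {p : ℕ × ℕ} (hp : p ∈ D) : p.1 ≤ rowBound D :=
  Finset.le_sup (f := id) (Finset.mem_image_of_mem Prod.fst hp)

lemma darkAux_eq_dark {D : Finset (ℕ × ℕ)} :
    ∀ {M : ℕ}, rowBound D ≤ M → darkAux D M M = dark D := by
  intro M hM
  induction M with
  | zero => rw [dark, Nat.le_zero.mp hM]
  | succ M ih =>
    rcases Nat.lt_or_ge (rowBound D) (M + 1) with h' | h'
    · have hMle := Nat.lt_succ_iff.mp h'
      have hemp : ∀ c, (M + 1, c) ∉ D := by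
        intro c hc
        have := rowBound_spec hc
        simp at this; omega
      rw [darkAux_shift hemp M, ih hMle]
    · have : rowBound D = M + 1 := le_antisymm hM h'
      rw [dark, this]

/-! ### rothe lemmas -/

lemma mem_rothe_row {n : ℕ} (w : Equiv.Perm (Fin n)) (r : Fin n) (v : ℕ) :
    ((r : ℕ) + 1, v) ∈ rothe w ↔ ∃ j : Fin n, r < j ∧ w j < w r ∧ v = (w j : ℕ) + 1 := by
  simp only [rothe, Finset.mem_image, Finset.mem_filter, Finset.mem_univ, true_and]
  constructor
  · rintro ⟨p, ⟨hlt, hw⟩, heq⟩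
    obtain ⟨h1, h2⟩ := Prod.mk.injEq .. ▸ heq
    have hp1 : p.1 = r := Fin.ext (by omega)
    exact ⟨p.2, hp1 ▸ hlt, hp1 ▸ hw, h2.symm⟩
  · rintro ⟨j, hj, hw, rfl⟩
    exact ⟨(r, j), ⟨hj, hw⟩, rfl⟩

lemma rothe_row_le {n : ℕ} {w : Equiv.Perm (Fin n)} {p : ℕ × ℕ} (hp : p ∈ rothe w) :
    p.1 ≤ n := by
  simp only [rothe, Finset.mem_image, Finset.mem_filter] at hp
  obtain ⟨q, -, rfl⟩ := hp
  exact q.1.2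

lemma rowBound_rothe_le {n : ℕ} (w : Equiv.Perm (Fin n)) : rowBound (rothe w) ≤ n := by
  apply Finset.sup_le
  intro b hb
  simp only [Finset.mem_image] at hb
  obtain ⟨p, hp, rfl⟩ := hb
  exact rothe_row_le hp

end Aux


section Main

lemma darkAux_succ (D : Finset (ℕ × ℕ)) (N k : ℕ) :
    darkAux D N (k + 1) = darkStep D (darkAux D N k) (N - k) := rfl

lemma rowOneAux_succ {n : ℕ} (w : Equiv.Perm (Fin n)) (k : ℕ) :
    rowOneAux w (k + 1) = (insertRow (rowOneAux w k) (oneline w (n - 1 - k))).1 := rfl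

lemma mem_darkStep_cols {D S : Finset (ℕ × ℕ)} {N v : ℕ} :
    v ∈ (D.filter fun p => p.1 = N ∧ ∀ q ∈ S, q.2 ≠ p.2).image Prod.snd ↔
      ((N, v) ∈ D ∧ ∀ q ∈ S, q.2 ≠ v) := by
  simp only [Finset.mem_image, Finset.mem_filter]
  constructor
  · rintro ⟨p, ⟨hD, h1, h2⟩, rfl⟩
    refine ⟨?_, h2⟩
    rwa [← h1, Prod.mk.eta]
  · rintro ⟨hD, h2⟩
    exact ⟨(N, v), ⟨hD, rfl, h2⟩, rfl⟩

lemma darkStep_none {D S : Finset (ℕ × ℕ)} {N : ℕ}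
    (h : ∀ v, ¬ ((N, v) ∈ D ∧ ∀ q ∈ S, q.2 ≠ v)) : darkStep D S N = S := by
  simp only [darkStep]
  rw [dif_neg]
  rintro ⟨v, hv⟩
  exact h v (mem_darkStep_cols.mp hv)

lemma darkStep_some {D S : Finset (ℕ × ℕ)} {N c : ℕ}
    (h1 : (N, c) ∈ D ∧ ∀ q ∈ S, q.2 ≠ c)
    (h2 : ∀ v, ((N, v) ∈ D ∧ ∀ q ∈ S, q.2 ≠ v) → v ≤ c) :
    darkStep D S N = insert (N, c) S := by
  have hmem : c ∈ (D.filter fun p => p.1 = N ∧ ∀ q ∈ S, q.2 ≠ p.2).image Prod.snd :=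
    mem_darkStep_cols.mpr h1
  have hne : ((D.filter fun p => p.1 = N ∧ ∀ q ∈ S, q.2 ≠ p.2).image Prod.snd).Nonempty :=
    ⟨c, hmem⟩
  simp only [darkStep]
  rw [dif_pos hne]
  have hmax : Finset.max' _ hne = c :=
    le_antisymm (Finset.max'_le _ _ c (fun v hv => h2 v (mem_darkStep_cols.mp hv)))
      (Finset.le_max' _ _ hmem)
  rw [hmax]

/-- Values `w j + 1` for positions `j ≥ n - k` (0-based). -/
def Vmem {n : ℕ} (w : Equiv.Perm (Fin n)) (k v : ℕ) : Prop :=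
  ∃ j : Fin n, n - k ≤ (j : ℕ) ∧ v = (w j : ℕ) + 1

lemma Vmem_mono {n : ℕ} {w : Equiv.Perm (Fin n)} {k v : ℕ} (h : Vmem w k v) :
    Vmem w (k + 1) v := by
  obtain ⟨j, hj, hv⟩ := h
  exact ⟨j, by omega, hv⟩

/-- The full invariant relating Schensted row one and the dark clouds. -/
def SnowInv {n : ℕ} (w : Equiv.Perm (Fin n)) (k : ℕ) : Prop :=
  (rowOneAux w k).Pairwise (· > ·) ∧
  (∀ a ∈ rowOneAux w k, Vmem w k a) ∧
  (∀ v, (∃ p ∈ darkAux (rothe w) n k, p.2 = v) ↔ Vmem w k v ∧ v ∉ rowOneAux w k)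

lemma snowInv_zero {n : ℕ} (w : Equiv.Perm (Fin n)) : SnowInv w 0 := by
  refine ⟨List.Pairwise.nil, by simp [rowOneAux], ?_⟩
  intro v
  constructor
  · rintro ⟨p, hp, -⟩
    simp [darkAux] at hp
  · rintro ⟨⟨j, hj, -⟩, -⟩
    have := j.2
    omega

lemma snowInv_step {n : ℕ} (w : Equiv.Perm (Fin n)) {k : ℕ} (hk : k < n) (hInv : SnowInv w k) :
    SnowInv w (k + 1) ∧
    ((insertRow (rowOneAux w k) (oneline w (n - 1 - k))).2 = none →
        darkAux (rothe w) n (k + 1) = darkAux (rothe w) n k) ∧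
    (∀ c, (insertRow (rowOneAux w k) (oneline w (n - 1 - k))).2 = some c →
        darkAux (rothe w) n (k + 1) = insert (n - k, c) (darkAux (rothe w) n k)) := by
  obtain ⟨hsort, hTV, hcols⟩ := hInv
  set T := rowOneAux w k with hT
  set S := darkAux (rothe w) n k with hS
  have hrlt : n - 1 - k < n := by omega
  set r : Fin n := ⟨n - 1 - k, hrlt⟩ with hr
  have hrv : (r : ℕ) = n - 1 - k := rfl
  have hx : oneline w (n - 1 - k) = (w r : ℕ) + 1 := by
    rw [oneline, dif_pos hrlt]
  set x := (w r : ℕ) + 1 with hxdef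
  have hn_k : n - k = (r : ℕ) + 1 := by omega
  -- x is not among the already inserted values
  have hxV : ¬ Vmem w k x := by
    rintro ⟨j, hj, hvj⟩
    have hwj : (w j : ℕ) = (w r : ℕ) := by omega
    have : j = r := w.injective (Fin.ext hwj)
    subst this
    omega
  have hxT : x ∉ T := fun h => hxV (hTV x h)
  -- Vmem at level k+1
  have hVsucc : ∀ v, Vmem w (k + 1) v ↔ v = x ∨ Vmem w k v := by
    intro v
    constructor
    · rintro ⟨j, hj, rfl⟩
      rcases Nat.lt_or_ge (n - 1 - k) (j : ℕ) with h' | h'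
      · exact Or.inr ⟨j, by omega, rfl⟩
      · have hj' : (j : ℕ) = n - 1 - k := by omega
        have : j = r := Fin.ext hj'
        subst this
        exact Or.inl rfl
    · rintro (rfl | hv)
      · exact ⟨r, by omega, rfl⟩
      · exact Vmem_mono hv
  -- the cells of row n - k of the Rothe diagram
  have hrow : ∀ v, ((n - k, v) ∈ rothe w) ↔ Vmem w k v ∧ v < x := by
    intro v
    rw [hn_k, mem_rothe_row]
    constructor
    · rintro ⟨j, hj, hw, rfl⟩
      refine ⟨⟨j, by omega, rfl⟩, by omega⟩
    · rintro ⟨⟨j, hj, rfl⟩, hv⟩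
      refine ⟨j, ?_, by omega, rfl⟩
      have : (r : ℕ) < (j : ℕ) := by omega
      exact this
  -- the candidate columns in the dark step are exactly the row-one entries below x
  have hcand : ∀ v, ((n - k, v) ∈ rothe w ∧ ∀ q ∈ S, q.2 ≠ v) ↔ v ∈ T ∧ v < x := by
    intro v
    rw [hrow]
    constructor
    · rintro ⟨⟨hV, hvx⟩, hq⟩
      refine ⟨?_, hvx⟩
      by_contra hvT
      obtain ⟨p, hp, hpv⟩ := (hcols v).mpr ⟨hV, hvT⟩
      exact hq p hp hpv
    · rintro ⟨hvT, hvx⟩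
      refine ⟨⟨hTV v hvT, hvx⟩, ?_⟩
      intro q hq hqv
      exact ((hcols v).mp ⟨q, hq, hqv⟩).2 hvT
  rw [darkAux_succ, ← hS]
  cases hbump : (insertRow T (oneline w (n - 1 - k))).2 with
  | none =>
    rw [hx] at hbump
    obtain ⟨heq, hnb⟩ := insertRow_none_eq hbump
    have hstep : darkStep (rothe w) S (n - k) = S := by
      apply darkStep_none
      intro v hv
      obtain ⟨hvT, hvx⟩ := (hcand v).mp hv
      exact hnb v hvT hvx
    refine ⟨?_, fun _ => hstep, fun c hc => by simp at hc⟩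
    have hT' : rowOneAux w (k + 1) = T ++ [x] := by
      rw [rowOneAux_succ, ← hT, hx, heq]
    refine ⟨?_, ?_, ?_⟩
    · rw [hT']
      refine List.pairwise_append.mpr ⟨hsort, List.pairwise_singleton _ x, ?_⟩
      intro a ha b hb
      rw [List.mem_singleton] at hb
      subst hb
      have h1 := hnb a ha
      have h2 : a ≠ x := fun h => hxT (h ▸ ha)
      omega
    · intro a ha
      rw [hT', List.mem_append, List.mem_singleton] at ha
      rcases ha with ha | rfl
      · exact Vmem_mono (hTV a ha)
      · exact (hVsucc x).mpr (Or.inl rfl)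
    · intro v
      rw [darkAux_succ, ← hS, hstep, hcols v, hT', hVsucc]
      constructor
      · rintro ⟨hV, hvT⟩
        refine ⟨Or.inr hV, ?_⟩
        rw [List.mem_append, List.mem_singleton]
        rintro (h | rfl)
        · exact hvT h
        · exact hxV hV
      · rintro ⟨hV, hvT⟩
        rw [List.mem_append, List.mem_singleton] at hvT
        push_neg at hvT
        rcases hV with rfl | hV
        · exact absurd rfl hvT.2
        · exact ⟨hV, hvT.1⟩
  | some c =>
    rw [hx] at hbump
    obtain ⟨hcT, hcx, hcmax, hmemiff⟩ := insertRow_some_spec hsort hbump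
    have hstep : darkStep (rothe w) S (n - k) = insert (n - k, c) S := by
      apply darkStep_some
      · exact (hcand c).mpr ⟨hcT, hcx⟩
      · intro v hv
        obtain ⟨hvT, hvx⟩ := (hcand v).mp hv
        exact hcmax v hvT hvx
    refine ⟨?_, fun hn => by simp at hn, fun c' hc' => ?_⟩
    swap
    · obtain rfl := Option.some.inj hc'
      exact hstep
    have hT' : ∀ a, a ∈ rowOneAux w (k + 1) ↔ a = x ∨ (a ∈ T ∧ a ≠ c) := by
      intro a
      rw [rowOneAux_succ, ← hT, hx]
      exact hmemiff a
    refine ⟨?_, ?_, ?_⟩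
    · rw [rowOneAux_succ, ← hT, hx]
      exact insertRow_sorted hsort hxT
    · intro a ha
      rcases (hT' a).mp ha with rfl | ⟨ha', -⟩
      · exact (hVsucc x).mpr (Or.inl rfl)
      · exact Vmem_mono (hTV a ha')
    · intro v
      rw [darkAux_succ, ← hS, hstep]
      have hmem : (∃ p ∈ insert (n - k, c) S, p.2 = v) ↔ v = c ∨ ∃ p ∈ S, p.2 = v := by
        constructor
        · rintro ⟨p, hp, rfl⟩
          rcases Finset.mem_insert.mp hp with rfl | hp
          · exact Or.inl rfl
          · exact Or.inr ⟨p, hp, rfl⟩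
        · rintro (rfl | ⟨p, hp, rfl⟩)
          · exact ⟨(n - k, v), Finset.mem_insert_self _ _, rfl⟩
          · exact ⟨p, Finset.mem_insert_of_mem hp, rfl⟩
      rw [hmem, hVsucc]
      constructor
      · rintro (rfl | hv)
        · refine ⟨Or.inr (hTV v hcT), ?_⟩
          rw [hT']
          rintro (rfl | ⟨-, hne⟩)
          · omega
          · exact hne rfl
        · obtain ⟨hV, hvT⟩ := (hcols v).mp hv
          refine ⟨Or.inr hV, ?_⟩
          rw [hT']
          rintro (rfl | ⟨hv', -⟩)
          · exact hxV hV
          · exact hvT hv'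
      · rintro ⟨hV, hvT'⟩
        have hvx : v ≠ x := by
          rintro rfl
          exact hvT' ((hT' x).mpr (Or.inl rfl))
        have hV' : Vmem w k v := by
          rcases hV with rfl | hV
          · exact absurd rfl hvx
          · exact hV
        by_cases hvc : v = c
        · exact Or.inl hvc
        · refine Or.inr ((hcols v).mpr ⟨hV', ?_⟩)
          intro hvT
          exact hvT' ((hT' v).mpr (Or.inr ⟨hvT, hvc⟩))

lemma snowInv_all {n : ℕ} (w : Equiv.Perm (Fin n)) : ∀ k, k ≤ n → SnowInv w k := by
  intro k
  induction k with
  | zero => intro _; exact snowInv_zero w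
  | succ k ih =>
    intro hk
    have hk' : k < n := by omega
    exact (snowInv_step w hk' (ih (by omega))).1

end Main


/-- during Schensted insertion of `w(n), …, w(1)`, if `w(r)` bumps
nothing from row one then row `r` of `snow(RD(w))` has no dark cloud, and if it
bumps the value `c` then `(r, c)` is a dark cloud of `snow(RD(w))`. -/
theorem dark_rothe_via_schensted (n : ℕ) (w : Equiv.Perm (Fin n)) (r : Fin n) :
    (bumpedFromRowOne w r = none → ∀ c, ((r : ℕ) + 1, c) ∉ dark (rothe w)) ∧
    ∀ c : ℕ, bumpedFromRowOne w r = some c → ((r : ℕ) + 1, c) ∈ dark (rothe w) := by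
  have hrn : (r : ℕ) < n := r.2
  set k0 := n - 1 - (r : ℕ) with hk0
  have hk0n : k0 < n := by omega
  have hr' : n - 1 - k0 = (r : ℕ) := by omega
  obtain ⟨-, hnone, hsome⟩ := snowInv_step w hk0n (snowInv_all w k0 (le_of_lt hk0n))
  have hb : bumpedFromRowOne w r = (insertRow (rowOneAux w k0) (oneline w (n - 1 - k0))).2 := by
    rw [bumpedFromRowOne, hr', hk0]
  have hdark : darkAux (rothe w) n n = dark (rothe w) :=
    darkAux_eq_dark (rowBound_rothe_le w)
  constructor
  · intro hbn c hc
    rw [← hdark] at hc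
    have h1 : ((r : ℕ) + 1, c) ∈ darkAux (rothe w) n (k0 + 1) :=
      darkAux_rev (by omega) hc (by simp; omega)
    rw [hnone (hb ▸ hbn)] at h1
    have h2 := darkAux_row h1
    simp at h2
    omega
  · intro c hbc
    have h1 : darkAux (rothe w) n (k0 + 1) = insert (n - k0, c) (darkAux (rothe w) n k0) :=
      hsome c (hb ▸ hbc)
    have h2 : ((r : ℕ) + 1, c) ∈ darkAux (rothe w) n (k0 + 1) := by
      rw [h1]
      have : n - k0 = (r : ℕ) + 1 := by omega
      rw [this]
      exact Finset.mem_insert_self _ _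
    rw [← hdark]
    exact darkAux_mono (by omega) h2

end
end

section
/- Let w ∈ S_n be an inverse fireworks permutation and r ∈ [n] a row such that row r of RD(w) is nonempty. Then the rightmost cell in row r of RD(w) is (r, w(r)−1). -/
open scoped Classical

noncomputable section

private lemma runstart_aux {n : ℕ} (u : Equiv.Perm (Fin n)) :
    ∀ m, ∀ v : Fin n, (v : ℕ) ≤ m → ∃ i, IsRunStart u i ∧ i ≤ v ∧ u v ≤ u i := by
  intro m
  induction m with
  | zero =>
    intro v hv
    refine ⟨v, ?_, le_refl _, le_refl _⟩
    intro j hj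
    omega
  | succ m ih =>
    intro v hv
    by_cases h : IsRunStart u v
    · exact ⟨v, h, le_refl _, le_refl _⟩
    · unfold IsRunStart at h
      push_neg at h
      obtain ⟨j, hj, hle⟩ := h
      obtain ⟨i, hi, hile, hui⟩ := ih j (by omega)
      exact ⟨i, hi, le_trans hile (by exact Fin.le_of_lt (by omega)), le_trans hle hui⟩

private lemma mem_rothe_iff {n : ℕ} (w : Equiv.Perm (Fin n)) (r : Fin n) (c : ℕ) :
    ((r : ℕ) + 1, c) ∈ rothe w ↔ ∃ r' : Fin n, r < r' ∧ w r' < w r ∧ (w r' : ℕ) + 1 = c := by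
  unfold rothe
  simp only [Finset.mem_image, Finset.mem_filter, Finset.mem_univ, true_and, Prod.exists,
    Prod.mk.injEq]
  constructor
  · rintro ⟨a, b, ⟨hab, hw⟩, h1, h2⟩
    have ha : a = r := Fin.ext (by omega)
    subst ha
    exact ⟨b, hab, hw, h2⟩
  · rintro ⟨r', h1, h2, h3⟩
    exact ⟨r, r', ⟨h1, h2⟩, rfl, h3⟩

/-- for an inverse fireworks `w`, the rightmost cell of a nonempty
row `r` of `RD(w)` is `(r, w(r) - 1)` (in our 1-based encoding, column
`(w r : ℕ)` since the 1-based value of `w` at `r` is `(w r : ℕ) + 1`). -/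
theorem rothe_rightmost_of_inverseFireworks (n : ℕ) (w : Equiv.Perm (Fin n))
    (hw : InverseFireworks w) (r : Fin n) (hne : ∃ c, ((r : ℕ) + 1, c) ∈ rothe w) :
    ((r : ℕ) + 1, (w r : ℕ)) ∈ rothe w ∧
      ∀ c, ((r : ℕ) + 1, c) ∈ rothe w → c ≤ (w r : ℕ) := by
  obtain ⟨c, hc⟩ := hne
  rw [mem_rothe_iff] at hc
  obtain ⟨r', hrr', hww', -⟩ := hc
  have hwr1 : 1 ≤ (w r : ℕ) := by
    have : (w r' : ℕ) < (w r : ℕ) := hww'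
    omega
  set u : Equiv.Perm (Fin n) := w⁻¹ with hu
  have hF : Fireworks u := hw
  constructor
  · -- rightmost cell: value (w r) - 1 occurs after position r
    have hd : (w r : ℕ) - 1 < n := by have := (w r).isLt; omega
    set d : Fin n := ⟨(w r : ℕ) - 1, hd⟩ with hdd
    have hdne : d ≠ w r := by
      intro h
      have : (d : ℕ) = (w r : ℕ) := by rw [h]
      simp [hdd] at this
      omega
    have hud : r < u d := by
      by_contra hle
      push_neg at hle
      have hune : u d ≠ r := by
        intro h
        have : d = w r := by
          have := congrArg w h
          simpa [hu] using this
        exact hdne this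
      have hudlt : u d < r := lt_of_le_of_ne hle hune
      -- then (w r) is a run start of u
      have hstart : IsRunStart u (w r) := by
        intro j hj
        have hjd : j = d := Fin.ext (by simp [hdd]; omega)
        subst hjd
        have : u (w r) = r := by simp [hu]
        rw [this]
        exact hudlt
      -- run start containing value w r'
      obtain ⟨i, hi, hile, hui⟩ := runstart_aux u (w r' : ℕ) (w r') le_rfl
      have hiv : i < w r := lt_of_le_of_lt hile hww'
      have := hF i (w r) hi hstart hiv
      have hur : u (w r) = r := by simp [hu]
      have hur' : u (w r') = r' := by simp [hu]
      rw [hur] at this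
      rw [hur'] at hui
      exact absurd (lt_of_lt_of_le hrr' (le_trans hui (le_of_lt this))) (lt_irrefl r)
    rw [mem_rothe_iff]
    refine ⟨u d, hud, ?_, ?_⟩
    · have : w (u d) = d := by simp [hu]
      rw [this]
      exact Fin.lt_def.mpr (by simp [hdd]; omega)
    · have : w (u d) = d := by simp [hu]
      rw [this]
      simp [hdd]
      omega
  · intro c hc
    rw [mem_rothe_iff] at hc
    obtain ⟨r'', -, h2, h3⟩ := hc
    have : (w r'' : ℕ) < (w r : ℕ) := h2
    omega

end
end

section
/- Define the generating function F(q) = Σ_{α snowy} q^{raj(α)} summed over all snowy weak compositions, where raj(α) = |α| + |{(r,r') : r < r', α_r < α_{r'}}|. Then F(q), as a formal power series, equals the infinite product ∏_{m ≥ 1} (1 + q^m/(1−q)). More precisely, for every M ≥ 0, Σ over snowy weak compositions with all entries at most M of q^{raj(α)} equals ∏_{m=1}^{M} (1 + q^m/(1−q)) as formal power series in q. -/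
open scoped Classical

noncomputable section

/-! ### Auxiliary development for Statement 17 -/

namespace SnowyAux

open Finset

/-- The statistic `|α| + inv(α)`. -/
def stat (α : WeakComp) : ℕ := wsum α + invCount α

/-- The number of `r` with `1 ≤ r < r'` and `α r < α r'`. -/
def cnt (α : WeakComp) (r' : ℕ) : ℕ :=
  ((Finset.Ico 1 r').filter fun r => α r < α r').card

lemma cnt_eq_zero (α : WeakComp) (r' : ℕ) (h : α r' = 0) : cnt α r' = 0 := by
  rw [cnt, Finset.card_eq_zero, Finset.filter_eq_empty_iff]
  intro r _
  omega

lemma cnt_eq_sum (α : WeakComp) (r' : ℕ) :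
    cnt α r' = ∑ r ∈ Finset.range r', (if 1 ≤ r ∧ α r < α r' then 1 else 0) := by
  rw [cnt, Finset.card_filter]
  rw [show Finset.Ico 1 r' = (Finset.range r').filter (fun r => 1 ≤ r) by
    ext x; simp only [Finset.mem_Ico, Finset.mem_filter, Finset.mem_range]; omega]
  rw [Finset.sum_filter]
  refine Finset.sum_congr rfl fun r hr => ?_
  split_ifs <;> omega

lemma wsum_eq_sum (α : WeakComp) (N : ℕ) (h : α.support ⊆ Finset.range N) :
    wsum α = ∑ r ∈ Finset.range N, α r :=
  Finsupp.sum_of_support_subset α h _ (fun _ _ => rfl)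

lemma invCount_eq_sum_cnt (α : WeakComp) (N : ℕ) (h : α.support ⊆ Finset.range N) :
    invCount α = ∑ r' ∈ Finset.range N, cnt α r' := by
  rw [invCount]
  rw [Finset.card_eq_sum_card_fiberwise (f := Prod.snd) (t := Finset.range N)
    (fun x hx => by
      simp only [Finset.mem_coe, Finset.mem_filter, Finset.mem_product] at hx
      exact h hx.1.2)]
  refine Finset.sum_congr rfl fun r' _ => ?_
  by_cases hs : α r' = 0
  · rw [cnt_eq_zero α r' hs, Finset.card_eq_zero, Finset.filter_eq_empty_iff]
    rintro ⟨a, b⟩ hab hb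
    simp only [Finset.mem_filter, Finset.mem_product, Finsupp.mem_support_iff] at hab
    have hb' : b = r' := hb
    apply hab.1.2
    rw [hb', hs]
  · have : (((Finset.Icc 1 (α.support.sup id) ×ˢ α.support).filter
        fun p => p.1 < p.2 ∧ α p.1 < α p.2).filter fun x => x.2 = r')
        = ((Finset.Ico 1 r').filter fun r => α r < α r').image (fun r => (r, r')) := by
      ext ⟨a, b⟩
      constructor
      · intro hab
        rw [Finset.mem_filter] at hab
        obtain ⟨hab1, hbr⟩ := hab
        rw [Finset.mem_filter] at hab1
        obtain ⟨hmem, hP⟩ := hab1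
        rw [Finset.mem_product] at hmem
        have hbr' : b = r' := hbr
        subst hbr'
        have h4 : a < b := hP.1
        have h5 : α a < α b := hP.2
        rw [Finset.mem_image]
        exact ⟨a, Finset.mem_filter.2 ⟨Finset.mem_Ico.2 ⟨(Finset.mem_Icc.1 hmem.1).1, h4⟩, h5⟩, rfl⟩
      · intro hab
        rw [Finset.mem_image] at hab
        obtain ⟨r, hrmem, hreq⟩ := hab
        obtain ⟨hr1, hr2⟩ := Finset.mem_filter.1 hrmem
        rw [Finset.mem_Ico] at hr1
        cases hreq
        have hb : r' ∈ α.support := Finsupp.mem_support_iff.2 hs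
        have hble : r' ≤ α.support.sup id := by
          have := Finset.le_sup (f := id) hb
          simpa using this
        rw [Finset.mem_filter, Finset.mem_filter, Finset.mem_product]
        exact ⟨⟨⟨Finset.mem_Icc.2 ⟨hr1.1, by omega⟩, hb⟩, hr1.2, hr2⟩, rfl⟩
    rw [this, Finset.card_image_of_injective _ (fun x y hxy => by
      simpa using congrArg Prod.fst hxy)]
    rfl

lemma sum_insert_pattern (G : ℕ → ℕ) (c k N : ℕ) (hk : k + 1 ≤ N) :
    ∑ r ∈ Finset.range (N + 1),
        (if r < k + 1 then G r else if r = k + 1 then c else G (r - 1)) =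
      c + ∑ r ∈ Finset.range N, G r := by
  induction N, hk using Nat.le_induction with
  | base =>
    rw [Finset.sum_range_succ, if_neg (by omega), if_pos rfl, add_comm]
    congr 1
    exact Finset.sum_congr rfl fun r hr => by
      rw [if_pos (Finset.mem_range.1 hr)]
  | succ N hN ih =>
    rw [Finset.sum_range_succ, ih, Finset.sum_range_succ,
      if_neg (by omega), if_neg (by omega)]
    have : N + 1 - 1 = N := by omega
    rw [this]
    ring

/-- Insert the value `v` at position `k+1`, shifting later entries. -/
def ins (v k : ℕ) (β : WeakComp) : WeakComp :=
  Finsupp.onFinset (insert (k + 1) (β.support ∪ β.support.image (· + 1)))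
    (fun r => if r < k + 1 then β r else if r = k + 1 then v else β (r - 1))
    (by
      intro r hr
      replace hr : (if r < k + 1 then β r else if r = k + 1 then v else β (r - 1)) ≠ 0 := hr
      simp only [Finset.mem_insert, Finset.mem_union, Finset.mem_image,
        Finsupp.mem_support_iff]
      split_ifs at hr with h1 h2
      · exact Or.inr (Or.inl hr)
      · exact Or.inl h2
      · exact Or.inr (Or.inr ⟨r - 1, hr, by omega⟩))

@[simp] lemma ins_apply (v k : ℕ) (β : WeakComp) (r : ℕ) :
    ins v k β r = if r < k + 1 then β r else if r = k + 1 then v else β (r - 1) := rfl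

/-- Delete position `p`, shifting later entries down. -/
def del (p : ℕ) (α : WeakComp) : WeakComp :=
  Finsupp.onFinset (α.support ∪ α.support.image (· - 1))
    (fun r => if r < p then α r else α (r + 1))
    (by
      intro r hr
      replace hr : (if r < p then α r else α (r + 1)) ≠ 0 := hr
      simp only [Finset.mem_union, Finset.mem_image, Finsupp.mem_support_iff]
      split_ifs at hr
      · exact Or.inl hr
      · exact Or.inr ⟨r + 1, hr, by omega⟩)

@[simp] lemma del_apply (p : ℕ) (α : WeakComp) (r : ℕ) :
    del p α r = if r < p then α r else α (r + 1) := rfl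

lemma del_apply' (p : ℕ) (α : WeakComp) (r : ℕ) :
    del p α r = α (if r < p then r else r + 1) := by
  rw [del_apply]; split_ifs <;> rfl

lemma ins_del (p : ℕ) (α : WeakComp) (hp : 1 ≤ p) (hv : True) :
    ins (α p) (p - 1) (del p α) = α := by
  ext r
  rw [ins_apply]
  have hpp : p - 1 + 1 = p := by omega
  rw [hpp]
  split_ifs with h1 h2
  · rw [del_apply, if_pos h1]
  · rw [h2]
  · rw [del_apply, if_neg (by omega)]
    congr 1
    omega

lemma ins_injective (v k : ℕ) : Function.Injective (ins v k) := by
  intro β β' h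
  ext r
  rcases lt_or_ge r (k + 1) with hr | hr
  · have := DFunLike.congr_fun h r
    rwa [ins_apply, ins_apply, if_pos hr, if_pos hr] at this
  · have := DFunLike.congr_fun h (r + 1)
    rw [ins_apply, ins_apply, if_neg (by omega), if_neg (by omega),
      if_neg (by omega), if_neg (by omega)] at this
    simpa using this

lemma snowy_ins (v k : ℕ) (β : WeakComp) (hβ : Snowy β) (hv : ∀ r, β r < v) :
    Snowy (ins v k β) := by
  intro r r' hpos heq
  have hv' : ∀ s, β s ≠ v := fun s => (hv s).ne
  rw [ins_apply] at hpos
  rw [ins_apply, ins_apply] at heq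
  split_ifs at hpos heq <;>
    first
      | omega
      | (exact hβ _ _ hpos heq)
      | (exact absurd heq (hv' _))
      | (exact absurd heq.symm (hv' _))
      | (have := hβ _ _ hpos heq; omega)

lemma cnt_ins_lt (v k : ℕ) (β : WeakComp) {r' : ℕ} (h : r' < k + 1) :
    cnt (ins v k β) r' = cnt β r' := by
  rw [cnt, cnt]
  congr 1
  refine Finset.filter_congr fun r hr => ?_
  simp only [Finset.mem_Ico] at hr
  rw [ins_apply, ins_apply, if_pos (by omega), if_pos h]

lemma cnt_ins_self (v k : ℕ) (β : WeakComp) (hv : ∀ r, β r < v) :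
    cnt (ins v k β) (k + 1) = k := by
  rw [cnt]
  rw [Finset.filter_true_of_mem (fun r hr => by
    simp only [Finset.mem_Ico] at hr
    rw [ins_apply, ins_apply, if_pos (by omega), if_neg (by omega), if_pos rfl]
    exact hv r)]
  rw [Nat.card_Ico]
  omega

lemma cnt_ins_gt (v k : ℕ) (β : WeakComp) (hv : ∀ r, β r < v) {r' : ℕ}
    (h : k + 1 < r') :
    cnt (ins v k β) r' = cnt β (r' - 1) := by
  obtain ⟨n, rfl⟩ : ∃ n, r' = n + 1 := ⟨r' - 1, by omega⟩
  have hn : n + 1 - 1 = n := by omega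
  rw [hn, cnt_eq_sum, cnt_eq_sum]
  have hins : ins v k β (n + 1) = β n := by
    rw [ins_apply, if_neg (by omega), if_neg (by omega), hn]
  have hpat := sum_insert_pattern (fun r => if 1 ≤ r ∧ β r < β n then 1 else 0) 0 k n (by omega)
  rw [Nat.zero_add] at hpat
  rw [← hpat]
  simp only [hins]
  refine Finset.sum_congr rfl fun r hr => ?_
  simp only [Finset.mem_range] at hr
  have hvn := hv n
  simp only [ins_apply]
  split_ifs <;> omega

lemma stat_ins (v k : ℕ) (β : WeakComp) (hv : ∀ r, β r < v) :
    stat (ins v k β) = stat β + v + k := by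
  obtain ⟨N, hN, hkN⟩ : ∃ N, β.support ⊆ Finset.range N ∧ k + 1 ≤ N := by
    refine ⟨max (β.support.sup id + 1) (k + 1), fun r hr => ?_, le_max_right _ _⟩
    have := Finset.le_sup (f := id) hr
    simp only [id_eq] at this
    simp only [Finset.mem_range]
    omega
  have hNmem : ∀ r, r ∈ β.support → r < N := fun r hr => Finset.mem_range.1 (hN hr)
  have hsupp : (ins v k β).support ⊆ Finset.range (N + 1) := by
    intro r hr
    rw [Finsupp.mem_support_iff, ins_apply] at hr
    simp only [Finset.mem_range]
    split_ifs at hr with h1 h2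
    · have := hNmem r (Finsupp.mem_support_iff.2 hr); omega
    · omega
    · have := hNmem (r - 1) (Finsupp.mem_support_iff.2 hr); omega
  rw [stat, stat, wsum_eq_sum _ (N + 1) hsupp, wsum_eq_sum β N hN,
    invCount_eq_sum_cnt _ (N + 1) hsupp, invCount_eq_sum_cnt β N hN]
  have h1 : ∑ r ∈ Finset.range (N + 1), ins v k β r = v + ∑ r ∈ Finset.range N, β r := by
    rw [← sum_insert_pattern (fun r => β r) v k N hkN]
    exact Finset.sum_congr rfl fun r _ => by rw [ins_apply]
  have h2 : ∑ r' ∈ Finset.range (N + 1), cnt (ins v k β) r'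
      = k + ∑ r' ∈ Finset.range N, cnt β r' := by
    rw [← sum_insert_pattern (cnt β) k k N hkN]
    refine Finset.sum_congr rfl fun r' _ => ?_
    rcases lt_trichotomy r' (k + 1) with h | h | h
    · rw [cnt_ins_lt v k β h, if_pos h]
    · rw [h, cnt_ins_self v k β hv, if_neg (by omega), if_pos rfl]
    · rw [cnt_ins_gt v k β hv h, if_neg (by omega), if_neg (by omega)]
  omega

lemma entry_le_wsum (α : WeakComp) (r : ℕ) : α r ≤ wsum α := by
  by_cases h : α r = 0
  · omega
  · exact Finset.single_le_sum (f := fun i => α i) (fun _ _ => Nat.zero_le _)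
      (Finsupp.mem_support_iff.2 h)

lemma card_support_le_wsum (α : WeakComp) : α.support.card ≤ wsum α := by
  rw [wsum, Finsupp.sum, Finset.card_eq_sum_ones]
  exact Finset.sum_le_sum fun i hi => by
    have := Finsupp.mem_support_iff.1 hi; omega

lemma supp_bound (α : WeakComp) (p : ℕ) (hp : α p ≠ 0) : p ≤ stat α + 1 := by
  set N := α.support.sup id + 1 with hNdef
  have hN : α.support ⊆ Finset.range N := fun r hr => by
    have := Finset.le_sup (f := id) hr
    simp only [id_eq] at this
    simp only [Finset.mem_range]
    omega
  have hpN : p < N := Finset.mem_range.1 (hN (Finsupp.mem_support_iff.2 hp))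
  have h1 : cnt α p ≤ invCount α := by
    rw [invCount_eq_sum_cnt α N hN]
    exact Finset.single_le_sum (f := fun r' => cnt α r') (fun _ _ => Nat.zero_le _)
      (Finset.mem_range.2 hpN)
  have h2 : ((Finset.Ico 1 p).filter fun r => α r = 0).card ≤ cnt α p := by
    apply Finset.card_le_card
    intro r hr
    simp only [Finset.mem_filter] at hr ⊢
    exact ⟨hr.1, by omega⟩
  have h3 : ((Finset.Ico 1 p).filter fun r => α r = 0).card
      + ((Finset.Ico 1 p).filter fun r => ¬ α r = 0).card = p - 1 := by
    rw [Finset.card_filter_add_card_filter_not, Nat.card_Ico]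
  have h4 : ((Finset.Ico 1 p).filter fun r => ¬ α r = 0).card ≤ α.support.card := by
    apply Finset.card_le_card
    intro r hr
    simp only [Finset.mem_filter] at hr
    exact Finsupp.mem_support_iff.2 hr.2
  have h5 := card_support_le_wsum α
  rw [stat] at *
  omega

/-- The finite set of snowy weak compositions with entries `≤ M` and statistic `d`. -/
def SC (M d : ℕ) : Finset WeakComp :=
  ((Finset.range (d + 2)).finsupp fun _ => Finset.range (d + 1)).filter
    fun α => α 0 = 0 ∧ Snowy α ∧ (∀ r, α r ≤ M) ∧ stat α = d

lemma mem_SC {M d : ℕ} {α : WeakComp} :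
    α ∈ SC M d ↔ (α 0 = 0 ∧ Snowy α ∧ (∀ r, α r ≤ M) ∧ stat α = d) := by
  rw [SC, Finset.mem_filter]
  constructor
  · exact fun h => h.2
  · intro h
    refine ⟨Finset.mem_finsupp_iff.2 ⟨?_, ?_⟩, h⟩
    · intro r hr
      have := supp_bound α r (Finsupp.mem_support_iff.1 hr)
      simp only [Finset.mem_range]
      omega
    · intro i _
      have h1 := entry_le_wsum α i
      have h2 : stat α = d := h.2.2.2
      rw [stat] at h2
      simp only [Finset.mem_range]
      omega

lemma card_subtype (M d : ℕ) :
    Nat.card {α : WeakComp // α 0 = 0 ∧ Snowy α ∧ (∀ r, α r ≤ M) ∧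
        wsum α + invCount α = d} = (SC M d).card := by
  rw [← Nat.card_eq_finsetCard]
  exact Nat.card_congr (Equiv.subtypeEquivRight fun α => by rw [mem_SC, stat])

lemma SC_card_rec (M d : ℕ) :
    (SC (M + 1) d).card = (SC M d).card + ∑ j ∈ Finset.range (d - M), (SC M j).card := by
  classical
  have hsplit := Finset.card_filter_add_card_filter_not
    (s := SC (M + 1) d) (p := fun α => ∃ p, α p = M + 1)
  have hnot : (SC (M + 1) d).filter (fun α => ¬ ∃ p, α p = M + 1) = SC M d := by
    ext α
    simp only [Finset.mem_filter, mem_SC, not_exists]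
    constructor
    · rintro ⟨⟨h0, hs, hle, hst⟩, hne⟩
      exact ⟨h0, hs, fun r => by have := hle r; have := hne r; omega, hst⟩
    · rintro ⟨h0, hs, hle, hst⟩
      exact ⟨⟨h0, hs, fun r => (hle r).trans (by omega), hst⟩,
        fun r hr => by have := hle r; omega⟩
  have hpos : (SC (M + 1) d).filter (fun α => ∃ p, α p = M + 1)
      = (Finset.range (d - M)).biUnion
          fun j => (SC M j).image (ins (M + 1) (d - M - 1 - j)) := by
    ext α
    simp only [Finset.mem_filter, Finset.mem_biUnion, Finset.mem_image, Finset.mem_range]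
    constructor
    · rintro ⟨hα, p, hp⟩
      obtain ⟨h0, hs, hle, hst⟩ := mem_SC.1 hα
      have hp1 : 1 ≤ p := by
        rcases Nat.eq_zero_or_pos p with rfl | h
        · rw [h0] at hp; omega
        · omega
      have hmax : ∀ r, r ≠ p → α r < M + 1 := by
        intro r hr
        have h1 := hle r
        rcases Nat.lt_or_ge (α r) (M + 1) with h | h
        · exact h
        · have : α r = M + 1 := by omega
          have := hs r p (by omega) (by rw [this, hp])
          omega
      set β := del p α with hβ
      have hβv : ∀ r, β r < M + 1 := by
        intro r
        rw [hβ, del_apply']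
        apply hmax
        split_ifs <;> omega
      have hins : ins (M + 1) (p - 1) β = α := by
        rw [hβ, ← hp]; exact ins_del p α hp1 trivial
      have hβ0 : β 0 = 0 := by rw [hβ, del_apply, if_pos (by omega)]; exact h0
      have hβs : Snowy β := by
        intro r r' hb1 hb2
        rw [hβ] at hb1 hb2
        rw [del_apply'] at hb1
        rw [del_apply', del_apply'] at hb2
        have := hs _ _ hb1 hb2
        split_ifs at this <;> omega
      have hβle : ∀ r, β r ≤ M := fun r => by have := hβv r; omega
      have hstat : stat α = stat β + (M + 1) + (p - 1) := by
        rw [← hins, stat_ins _ _ _ hβv]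
      have hβmem : β ∈ SC M (stat β) := mem_SC.2 ⟨hβ0, hβs, hβle, rfl⟩
      refine ⟨stat β, by omega, β, hβmem, ?_⟩
      have : d - M - 1 - stat β = p - 1 := by omega
      rw [this, hins]
    · rintro ⟨j, hj, β, hβmem, rfl⟩
      obtain ⟨hβ0, hβs, hβle, hβst⟩ := mem_SC.1 hβmem
      have hβv : ∀ r, β r < M + 1 := fun r => by have := hβle r; omega
      set k := d - M - 1 - j with hk
      refine ⟨mem_SC.2 ⟨?_, snowy_ins _ _ _ hβs hβv, ?_, ?_⟩, k + 1, ?_⟩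
      · rw [ins_apply, if_pos (by omega)]; exact hβ0
      · intro r
        rw [ins_apply]
        split_ifs with h1 h2
        · exact (hβle r).trans (by omega)
        · omega
        · exact (hβle (r - 1)).trans (by omega)
      · rw [stat_ins _ _ _ hβv, hβst]
        omega
      · rw [ins_apply, if_neg (by omega), if_pos rfl]
  rw [← hsplit, hnot, hpos, add_comm]
  congr 1
  rw [Finset.card_biUnion]
  · exact Finset.sum_congr rfl fun j _ =>
      Finset.card_image_of_injective _ (ins_injective _ _)
  · intro j hj j' hj' hjj'
    simp only [Finset.mem_coe, Finset.mem_range] at hj hj'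
    rw [Function.onFun, Finset.disjoint_left]
    rintro α hα hα'
    simp only [Finset.mem_image] at hα hα'
    obtain ⟨β, hβmem, rfl⟩ := hα
    obtain ⟨β', hβ'mem, heq⟩ := hα'
    obtain ⟨hβ0, hβs, hβle, hβst⟩ := mem_SC.1 hβmem
    obtain ⟨hβ'0, hβ's, hβ'le, hβ'st⟩ := mem_SC.1 hβ'mem
    have hβv : ∀ r, β r < M + 1 := fun r => by have := hβle r; omega
    have hsn : Snowy (ins (M + 1) (d - M - 1 - j) β) := snowy_ins _ _ _ hβs hβv
    have e1 : ins (M + 1) (d - M - 1 - j) β (d - M - 1 - j + 1) = M + 1 := by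
      rw [ins_apply, if_neg (by omega), if_pos rfl]
    have e2 : ins (M + 1) (d - M - 1 - j) β (d - M - 1 - j' + 1) = M + 1 := by
      rw [← heq, ins_apply, if_neg (by omega), if_pos rfl]
    have h0 : 0 < ins (M + 1) (d - M - 1 - j) β (d - M - 1 - j + 1) := by rw [e1]; omega
    have := hsn (d - M - 1 - j + 1) (d - M - 1 - j' + 1) h0 (by rw [e1, e2])
    omega

lemma stat_zero : stat 0 = 0 := by
  rw [stat, wsum, invCount]
  simp

lemma SC_zero (d : ℕ) : (SC 0 d).card = if d = 0 then 1 else 0 := by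
  have hz : ∀ α : WeakComp, (∀ r, α r ≤ 0) → α = 0 := by
    intro α hle
    ext r
    have := hle r
    simp only [Finsupp.coe_zero, Pi.zero_apply]
    omega
  split_ifs with hd
  · subst hd
    rw [Finset.card_eq_one]
    refine ⟨0, ?_⟩
    ext α
    rw [mem_SC, Finset.mem_singleton]
    constructor
    · rintro ⟨h0, hs, hle, hst⟩
      exact hz α hle
    · rintro rfl
      exact ⟨rfl, fun r r' h1 h2 => by simp at h1, fun r => le_rfl, stat_zero⟩
  · rw [Finset.card_eq_zero, Finset.eq_empty_iff_forall_notMem]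
    intro α hα
    obtain ⟨h0, hs, hle, hst⟩ := mem_SC.1 hα
    apply hd
    rw [← hst, hz α hle, stat_zero]

end SnowyAux

/-- for every `M ≥ 0`, the generating function of `raj` over snowy
weak compositions with entries at most `M` equals `∏_{m=1}^M (1 + q^m/(1-q))`
as formal power series. -/
theorem snowy_raj_generating_function (M : ℕ) :
    (PowerSeries.mk fun d =>
        (Nat.card {α : WeakComp // α 0 = 0 ∧ Snowy α ∧ (∀ r, α r ≤ M) ∧
            wsum α + invCount α = d} : ℤ)) =
      ∏ m ∈ Finset.Icc 1 M,
        (1 + (PowerSeries.X : PowerSeries ℤ) ^ m * PowerSeries.mk fun _ => (1 : ℤ)) := by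
  induction M with
  | zero =>
    rw [Finset.Icc_eq_empty (by omega), Finset.prod_empty]
    refine PowerSeries.ext fun d => ?_
    rw [PowerSeries.coeff_mk, PowerSeries.coeff_one]
    rw [show (Nat.card {α : WeakComp // α 0 = 0 ∧ Snowy α ∧ (∀ r, α r ≤ 0) ∧
        wsum α + invCount α = d}) = (SnowyAux.SC 0 d).card from SnowyAux.card_subtype 0 d]
    rw [SnowyAux.SC_zero d]
    split_ifs <;> simp
  | succ M ih =>
    rw [Finset.prod_Icc_succ_top (by omega : 1 ≤ M + 1), ← ih]
    refine PowerSeries.ext fun d => ?_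
    set C : PowerSeries ℤ := PowerSeries.mk fun _ => (1 : ℤ) with hC
    set A : PowerSeries ℤ := PowerSeries.mk fun d =>
      (Nat.card {α : WeakComp // α 0 = 0 ∧ Snowy α ∧ (∀ r, α r ≤ M) ∧
          wsum α + invCount α = d} : ℤ) with hA
    have hAco : ∀ e, PowerSeries.coeff e A = ((SnowyAux.SC M e).card : ℤ) := by
      intro e
      rw [hA, PowerSeries.coeff_mk, SnowyAux.card_subtype M e]
    have hCA : ∀ e, PowerSeries.coeff e (C * A)
        = ∑ j ∈ Finset.range (e + 1), ((SnowyAux.SC M j).card : ℤ) := by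
      intro e
      rw [PowerSeries.coeff_mul, Finset.Nat.sum_antidiagonal_eq_sum_range_succ_mk,
        ← Finset.sum_range_reflect]
      refine Finset.sum_congr rfl fun i hi => ?_
      simp only [Finset.mem_range] at hi
      rw [hC, PowerSeries.coeff_mk, one_mul, hAco]
      show ((SnowyAux.SC M (e - (e.succ - 1 - i))).card : ℤ) = _
      rw [show e - (e.succ - 1 - i) = i from by omega]
    rw [PowerSeries.coeff_mk,
      show A * (1 + PowerSeries.X ^ (M + 1) * C)
        = A + PowerSeries.X ^ (M + 1) * (C * A) from by ring,
      map_add, hAco, PowerSeries.coeff_X_pow_mul', SnowyAux.card_subtype (M + 1) d,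
      SnowyAux.SC_card_rec M d]
    push_cast
    split_ifs with h
    · rw [hCA, show d - (M + 1) + 1 = d - M from by omega]
      try push_cast
      try ring
    · rw [show d - M = 0 from by omega]
      try simp

end
end

section
/- The q-Bell polynomials B_n(q), defined by B_n(q) = Σ_{k=0}^n S_{n,k}(q) where S_{n+1,k}(q) = q^{k−1} S_{n,k−1}(q) + [k]_q S_{n,k}(q) with S_{0,0}(q) = 1, S_{0,k}(q) = 0 for k > 0, and [k]_q = 1 + q + ... + q^{k−1}, satisfy B_n(q) = Σ_{R} q^{GR_n(R)}, summing over all non-attacking rook placements R on the staircase Stair_n = {(r,c) : 1 ≤ r ≤ n−1, 1 ≤ c ≤ n−r}, where GR_n(R) is the number of cells of Stair_n not weakly above a rook in its column and not weakly left of a rook in its row. -/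
open scoped Classical

noncomputable section

lemma mem_stair {n : ℕ} {p : ℕ × ℕ} :
    p ∈ stair n ↔ 1 ≤ p.1 ∧ 1 ≤ p.2 ∧ p.1 + p.2 ≤ n := by
  simp only [stair, Finset.mem_filter, Finset.mem_product, Finset.mem_Icc]
  omega

def shiftC (p : ℕ × ℕ) : ℕ × ℕ := (p.1, p.2 + 1)

lemma shiftC_inj : Function.Injective shiftC := by
  intro p q h
  simp only [shiftC, Prod.ext_iff] at h ⊢
  omega

lemma stair_succ (n : ℕ) :
    stair (n + 1) =
      ((Finset.Icc 1 n).image fun r => (r, 1)) ∪ (stair n).image shiftC := by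
  ext ⟨a, b⟩
  simp only [Finset.mem_union, Finset.mem_image, Finset.mem_Icc, mem_stair, shiftC,
    Prod.ext_iff, Prod.mk.injEq]
  constructor
  · rintro ⟨h1, h2, h3⟩
    rcases Nat.lt_or_ge b 2 with hb | hb
    · exact Or.inl ⟨a, by omega, rfl, by omega⟩
    · refine Or.inr ⟨(a, b - 1), ?_, ?_, ?_⟩
      · simp only []; omega
      · rfl
      · simp only []; omega
  · rintro (⟨r, hr, rfl, rfl⟩ | ⟨⟨x, y⟩, hq, h1, h2⟩)
    · omega
    · simp only [] at hq h1 h2; omega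

def NA (R : Finset (ℕ × ℕ)) : Prop :=
  ∀ p ∈ R, ∀ q ∈ R, (p.1 = q.1 ∨ p.2 = q.2) → p = q

def plc (n : ℕ) : Finset (Finset (ℕ × ℕ)) :=
  (stair n).powerset.filter fun R => ∀ p ∈ R, ∀ q ∈ R, (p.1 = q.1 ∨ p.2 = q.2) → p = q

lemma mem_plc {n : ℕ} {R : Finset (ℕ × ℕ)} : R ∈ plc n ↔ R ⊆ stair n ∧ NA R := by
  simp [plc, NA, Finset.mem_filter, Finset.mem_powerset]

def rows (R : Finset (ℕ × ℕ)) : Finset ℕ := R.image Prod.fst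

def freeRows (n : ℕ) (R : Finset (ℕ × ℕ)) : Finset ℕ := Finset.Icc 1 n \ rows R

lemma rows_subset {n : ℕ} {R : Finset (ℕ × ℕ)} (h : R ⊆ stair n) :
    rows R ⊆ Finset.Icc 1 n := by
  intro r hr
  obtain ⟨p, hp, rfl⟩ := Finset.mem_image.mp hr
  have := mem_stair.mp (h hp)
  simp only [Finset.mem_Icc]
  omega

lemma card_rows {R : Finset (ℕ × ℕ)} (h : NA R) : (rows R).card = R.card :=
  Finset.card_image_of_injOn fun p hp q hq hpq => h p hp q hq (Or.inl hpq)

lemma card_freeRows {n : ℕ} {R : Finset (ℕ × ℕ)} (hsub : R ⊆ stair n) (hna : NA R) :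
    (freeRows n R).card = n - R.card := by
  rw [freeRows, Finset.card_sdiff_of_subset (rows_subset hsub), card_rows hna, Nat.card_Icc]
  omega

lemma card_plc_le {n : ℕ} {R : Finset (ℕ × ℕ)} (hsub : R ⊆ stair n) (hna : NA R) :
    R.card ≤ n - 1 := by
  rw [← card_rows hna]
  have h2 : rows R ⊆ Finset.Icc 1 (n - 1) := by
    intro r hr
    obtain ⟨p, hp, rfl⟩ := Finset.mem_image.mp hr
    have := mem_stair.mp (hsub hp)
    simp only [Finset.mem_Icc]
    omega
  calc (rows R).card ≤ (Finset.Icc 1 (n-1)).card := Finset.card_le_card h2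
    _ ≤ n - 1 := by rw [Nat.card_Icc]; omega

lemma snd_pos_of_subset {n : ℕ} {R : Finset (ℕ × ℕ)} (h : R ⊆ stair n) :
    ∀ p ∈ R, 1 ≤ p.2 := fun p hp => (mem_stair.mp (h hp)).2.1

lemma notMem_image_shift {R' : Finset (ℕ × ℕ)} (h : ∀ p ∈ R', 1 ≤ p.2) (r0 : ℕ) :
    (r0, 1) ∉ R'.image shiftC := by
  intro hmem
  obtain ⟨q, hq, heq⟩ := Finset.mem_image.mp hmem
  have := h q hq
  simp only [shiftC, Prod.ext_iff] at heq
  omega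

lemma GR_split (n : ℕ) (R : Finset (ℕ × ℕ)) :
    GRcount (n + 1) R =
      ((Finset.Icc 1 n).filter fun r =>
          ¬ ∃ p ∈ R, (p.2 = 1 ∧ r ≤ p.1) ∨ (p.1 = r ∧ (1:ℕ) ≤ p.2)).card +
      ((stair n).filter fun q =>
          ¬ ∃ p ∈ R, (p.2 = q.2 + 1 ∧ q.1 ≤ p.1) ∨ (p.1 = q.1 ∧ q.2 + 1 ≤ p.2)).card := by
  rw [GRcount, stair_succ, Finset.filter_union]
  rw [Finset.card_union_of_disjoint]
  · congr 1
    · rw [Finset.filter_image, Finset.card_image_of_injective _ (fun a b h => by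
        simpa using (Prod.ext_iff.mp h).1 : Function.Injective (fun r : ℕ => ((r, 1) : ℕ × ℕ)))]
    · rw [Finset.filter_image, Finset.card_image_of_injective _ shiftC_inj]
      apply congrArg
      apply Finset.filter_congr
      intro q _
      simp [shiftC]
  · apply Finset.disjoint_filter_filter
    rw [Finset.disjoint_left]
    rintro ⟨a, b⟩ h1 h2
    obtain ⟨r, _, heq⟩ := Finset.mem_image.mp h1
    obtain ⟨q, hq, heq2⟩ := Finset.mem_image.mp h2
    have := (mem_stair.mp hq).2.1
    simp only [Prod.ext_iff, shiftC] at heq heq2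
    omega

lemma shifted_part_congr {n : ℕ} {R' R : Finset (ℕ × ℕ)}
    (hmem : ∀ p ∈ R, p ∈ R'.image shiftC ∨ p.2 = 1)
    (hsup : R'.image shiftC ⊆ R) :
    ((stair n).filter fun q =>
        ¬ ∃ p ∈ R, (p.2 = q.2 + 1 ∧ q.1 ≤ p.1) ∨ (p.1 = q.1 ∧ q.2 + 1 ≤ p.2)) =
      (stair n).filter fun q =>
        ¬ ∃ p ∈ R', (p.2 = q.2 ∧ q.1 ≤ p.1) ∨ (p.1 = q.1 ∧ q.2 ≤ p.2) := by
  apply Finset.filter_congr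
  intro q hq
  have hq2 : 1 ≤ q.2 := (mem_stair.mp hq).2.1
  constructor
  · intro h
    rintro ⟨p, hp, hcond⟩
    refine h ⟨shiftC p, hsup (Finset.mem_image_of_mem _ hp), ?_⟩
    simp only [shiftC]
    rcases hcond with ⟨h1, h2⟩ | ⟨h1, h2⟩
    · exact Or.inl ⟨by omega, h2⟩
    · exact Or.inr ⟨h1, by omega⟩
  · intro h
    rintro ⟨p, hp, hcond⟩
    rcases hmem p hp with hp1 | hp1
    · obtain ⟨p', hp', rfl⟩ := Finset.mem_image.mp hp1
      refine h ⟨p', hp', ?_⟩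
      simp only [shiftC] at hcond
      rcases hcond with ⟨h1, h2⟩ | ⟨h1, h2⟩
      · exact Or.inl ⟨by omega, h2⟩
      · exact Or.inr ⟨h1, by omega⟩
    · rcases hcond with ⟨h2, _⟩ | ⟨_, h2⟩ <;> omega

lemma GR_caseA {n : ℕ} {R' : Finset (ℕ × ℕ)} (hsub : R' ⊆ stair n) (hna : NA R') :
    GRcount (n + 1) (R'.image shiftC) = (n - R'.card) + GRcount n R' := by
  rw [GR_split]
  congr 1
  · -- column 1 part
    have hcong : ∀ r ∈ Finset.Icc 1 n,
        (¬ ∃ p ∈ R'.image shiftC, (p.2 = 1 ∧ r ≤ p.1) ∨ (p.1 = r ∧ (1:ℕ) ≤ p.2)) ↔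
          r ∉ rows R' := by
      intro r _
      constructor
      · intro h hrow
        obtain ⟨p, hp, rfl⟩ := Finset.mem_image.mp hrow
        exact h ⟨shiftC p, Finset.mem_image_of_mem _ hp, Or.inr ⟨rfl, by simp [shiftC]⟩⟩
      · rintro h ⟨p, hp, hc⟩
        obtain ⟨p', hp', rfl⟩ := Finset.mem_image.mp hp
        have hq2 := snd_pos_of_subset hsub p' hp'
        rcases hc with ⟨h1, _⟩ | ⟨h1, _⟩
        · simp only [shiftC] at h1; omega
        · refine h ?_
          have : p'.1 = r := h1
          exact this ▸ Finset.mem_image_of_mem Prod.fst hp'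
    rw [Finset.filter_congr hcong]
    have : (Finset.Icc 1 n).filter (fun r => r ∉ rows R') = freeRows n R' := by
      rw [freeRows, Finset.sdiff_eq_filter]
    rw [this, card_freeRows hsub hna]
  · rw [shifted_part_congr (fun p hp => Or.inl hp) (fun p hp => hp), GRcount]

lemma GR_caseB {n : ℕ} {R' : Finset (ℕ × ℕ)} (hsub : R' ⊆ stair n) (hna : NA R')
    {r0 : ℕ} (hr0 : r0 ∈ freeRows n R') :
    GRcount (n + 1) (insert (r0, 1) (R'.image shiftC)) =
      ((freeRows n R').filter fun y => r0 < y).card + GRcount n R' := by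
  rw [GR_split]
  congr 1
  · have hcong : ∀ r ∈ Finset.Icc 1 n,
        (¬ ∃ p ∈ insert (r0, 1) (R'.image shiftC),
            (p.2 = 1 ∧ r ≤ p.1) ∨ (p.1 = r ∧ (1:ℕ) ≤ p.2)) ↔
          (r ∉ rows R' ∧ r0 < r) := by
      intro r _
      constructor
      · intro h
        constructor
        · intro hrow
          obtain ⟨p, hp, rfl⟩ := Finset.mem_image.mp hrow
          exact h ⟨shiftC p, Finset.mem_insert_of_mem (Finset.mem_image_of_mem _ hp),
            Or.inr ⟨rfl, by simp [shiftC]⟩⟩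
        · by_contra hle
          exact h ⟨(r0, 1), Finset.mem_insert_self _ _, Or.inl ⟨rfl, by omega⟩⟩
      · rintro ⟨h, hlt⟩ ⟨p, hp, hc⟩
        rcases Finset.mem_insert.mp hp with rfl | hp'
        · rcases hc with ⟨_, h2⟩ | ⟨h2, _⟩ <;> simp_all <;> omega
        · obtain ⟨q, hq, rfl⟩ := Finset.mem_image.mp hp'
          have hq2 := snd_pos_of_subset hsub q hq
          rcases hc with ⟨h1, _⟩ | ⟨h1, _⟩
          · simp only [shiftC] at h1; omega
          · refine h ?_
            have : q.1 = r := h1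
            exact this ▸ Finset.mem_image_of_mem Prod.fst hq
    rw [Finset.filter_congr hcong]
    have : (Finset.Icc 1 n).filter (fun r => r ∉ rows R' ∧ r0 < r) =
        (freeRows n R').filter fun y => r0 < y := by
      rw [freeRows, Finset.sdiff_eq_filter, Finset.filter_filter]
    rw [this]
  · rw [shifted_part_congr (R' := R')
      (fun p hp => (Finset.mem_insert.mp hp).elim (fun h => Or.inr (by rw [h])) Or.inl)
      (fun p hp => Finset.mem_insert_of_mem hp), GRcount]

def unshiftC (p : ℕ × ℕ) : ℕ × ℕ := (p.1, p.2 - 1)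

lemma image_shift_unshift {R : Finset (ℕ × ℕ)} (h : ∀ p ∈ R, 2 ≤ p.2) :
    (R.image unshiftC).image shiftC = R := by
  rw [Finset.image_image]
  rw [Finset.image_congr (g := id)]
  · exact Finset.image_id
  · intro p hp
    have := h p hp
    simp only [Function.comp, shiftC, unshiftC, id]
    ext <;> simp <;> omega

lemma unshift_plc {n : ℕ} {R : Finset (ℕ × ℕ)} (hsub : R ⊆ stair (n + 1)) (hna : NA R)
    (h2 : ∀ p ∈ R, 2 ≤ p.2) : R.image unshiftC ∈ plc n := by
  rw [mem_plc]
  constructor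
  · intro p hp
    obtain ⟨q, hq, rfl⟩ := Finset.mem_image.mp hp
    have := mem_stair.mp (hsub hq)
    have := h2 q hq
    rw [mem_stair]
    simp only [unshiftC]
    omega
  · intro p hp q hq hpq
    obtain ⟨p', hp', rfl⟩ := Finset.mem_image.mp hp
    obtain ⟨q', hq', rfl⟩ := Finset.mem_image.mp hq
    have h2p := h2 p' hp'
    have h2q := h2 q' hq'
    simp only [unshiftC] at hpq ⊢
    have : p' = q' := by
      apply hna p' hp' q' hq'
      rcases hpq with h | h
      · exact Or.inl h
      · exact Or.inr (by omega)
    rw [this]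

lemma image_shift_plc {n : ℕ} {R' : Finset (ℕ × ℕ)} (h : R' ∈ plc n) :
    R'.image shiftC ∈ plc (n + 1) := by
  rw [mem_plc] at h ⊢
  obtain ⟨hsub, hna⟩ := h
  constructor
  · intro p hp
    obtain ⟨q, hq, rfl⟩ := Finset.mem_image.mp hp
    have := mem_stair.mp (hsub hq)
    rw [mem_stair]
    simp only [shiftC]
    omega
  · intro p hp q hq hpq
    obtain ⟨p', hp', rfl⟩ := Finset.mem_image.mp hp
    obtain ⟨q', hq', rfl⟩ := Finset.mem_image.mp hq
    have : p' = q' := by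
      apply hna p' hp' q' hq'
      simp only [shiftC] at hpq
      rcases hpq with h | h
      · exact Or.inl h
      · exact Or.inr (by omega)
    rw [this]

lemma plc_succ_sum (n : ℕ) (f : Finset (ℕ × ℕ) → Polynomial ℤ) :
    ∑ R ∈ plc (n + 1), f R =
      ∑ R' ∈ plc n, (f (R'.image shiftC) +
        ∑ r0 ∈ freeRows n R', f (insert (r0, 1) (R'.image shiftC))) := by
  rw [Finset.sum_add_distrib]
  rw [← Finset.sum_filter_add_sum_filter_not (plc (n + 1)) (fun R => ∀ p ∈ R, p.2 ≠ 1)]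
  congr 1
  · -- case A : no rook in column 1
    symm
    apply Finset.sum_nbij (i := fun R' => R'.image shiftC)
    · intro R' hR'
      rw [Finset.mem_filter]
      refine ⟨image_shift_plc hR', ?_⟩
      intro p hp
      obtain ⟨q, hq, rfl⟩ := Finset.mem_image.mp hp
      have := snd_pos_of_subset (mem_plc.mp hR').1 q hq
      simp only [shiftC]
      omega
    · intro a _ b _ hab
      exact Finset.image_injective shiftC_inj hab
    · intro R hR
      simp only [Finset.coe_filter, Set.mem_setOf_eq] at hR
      obtain ⟨hplc, hcol⟩ := hR
      obtain ⟨hsub, hna⟩ := mem_plc.mp hplc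
      have h2 : ∀ p ∈ R, 2 ≤ p.2 := by
        intro p hp
        have := snd_pos_of_subset hsub p hp
        have := hcol p hp
        omega
      refine ⟨R.image unshiftC, ?_, image_shift_unshift h2⟩
      exact unshift_plc hsub hna h2
    · intro _ _; rfl
  · -- case B : rook in column 1
    rw [← Finset.sum_sigma (plc n) (fun R' => freeRows n R')
      (fun x => f (insert (x.2, 1) (x.1.image shiftC)))]
    symm
    apply Finset.sum_nbij (i := fun x => insert (x.2, 1) (x.1.image shiftC))
    · rintro ⟨R', r0⟩ hx
      rw [Finset.mem_sigma] at hx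
      obtain ⟨hR', hr0⟩ := hx
      obtain ⟨hsub, hna⟩ := mem_plc.mp hR'
      rw [Finset.mem_filter]
      simp only [Finset.mem_sdiff, Finset.mem_Icc, freeRows] at hr0
      constructor
      · rw [mem_plc]
        constructor
        · intro p hp
          rcases Finset.mem_insert.mp hp with rfl | hp'
          · rw [mem_stair]; simp; omega
          · exact (mem_plc.mp (image_shift_plc (mem_plc.mpr ⟨hsub, hna⟩))).1 hp'
        · intro p hp q hq hpq
          rcases Finset.mem_insert.mp hp with rfl | hp' <;>
            rcases Finset.mem_insert.mp hq with rfl | hq'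
          · rfl
          · exfalso
            obtain ⟨q', hq'', rfl⟩ := Finset.mem_image.mp hq'
            have := snd_pos_of_subset hsub q' hq''
            simp only [shiftC] at hpq
            rcases hpq with h | h
            · exact hr0.2 (h ▸ Finset.mem_image_of_mem Prod.fst hq'')
            · omega
          · exfalso
            obtain ⟨p', hp'', rfl⟩ := Finset.mem_image.mp hp'
            have := snd_pos_of_subset hsub p' hp''
            simp only [shiftC] at hpq
            rcases hpq with h | h
            · exact hr0.2 (h ▸ Finset.mem_image_of_mem Prod.fst hp'')
            · omega
          · exact (mem_plc.mp (image_shift_plc (mem_plc.mpr ⟨hsub, hna⟩))).2 p hp' q hq' hpq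
      · push_neg
        exact ⟨(r0, 1), Finset.mem_insert_self _ _, rfl⟩
    · rintro ⟨R', r0⟩ hx ⟨S', s0⟩ hy hxy
      rw [Finset.mem_coe, Finset.mem_sigma] at hx hy
      have hxy' : insert (r0, 1) (R'.image shiftC) = insert (s0, 1) (S'.image shiftC) := hxy
      have hR2 : ∀ p ∈ R'.image shiftC, 2 ≤ p.2 := by
        intro p hp
        obtain ⟨q, hq, rfl⟩ := Finset.mem_image.mp hp
        have := snd_pos_of_subset (mem_plc.mp hx.1).1 q hq
        simp only [shiftC]; omega
      have hS2 : ∀ p ∈ S'.image shiftC, 2 ≤ p.2 := by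
        intro p hp
        obtain ⟨q, hq, rfl⟩ := Finset.mem_image.mp hp
        have := snd_pos_of_subset (mem_plc.mp hy.1).1 q hq
        simp only [shiftC]; omega
      have hr : r0 = s0 := by
        have : ((r0, 1) : ℕ × ℕ) ∈ insert (s0, 1) (S'.image shiftC) := by
          rw [← hxy']; exact Finset.mem_insert_self _ _
        rcases Finset.mem_insert.mp this with h | h
        · exact (Prod.ext_iff.mp h).1
        · have := hS2 _ h; simp at this
      have hRS : R' = S' := by
        apply Finset.image_injective shiftC_inj
        have h1 : (r0, 1) ∉ R'.image shiftC := fun h => by have := hR2 _ h; simp at this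
        have h2 : (s0, 1) ∉ S'.image shiftC := fun h => by have := hS2 _ h; simp at this
        calc R'.image shiftC = (insert (r0, 1) (R'.image shiftC)).erase (r0, 1) :=
              (Finset.erase_insert h1).symm
          _ = (insert (s0, 1) (S'.image shiftC)).erase (s0, 1) := by rw [hxy', hr]
          _ = S'.image shiftC := Finset.erase_insert h2
      subst hRS
      subst hr
      rfl
    · intro R hR
      simp only [Finset.coe_filter, Set.mem_setOf_eq] at hR
      obtain ⟨hplc, hcol⟩ := hR
      obtain ⟨hsub, hna⟩ := mem_plc.mp hplc
      push_neg at hcol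
      obtain ⟨p0, hp0, hp01⟩ := hcol
      have h2 : ∀ p ∈ R.erase p0, 2 ≤ p.2 := by
        intro p hp
        have hp' := Finset.mem_of_mem_erase hp
        have := snd_pos_of_subset hsub p hp'
        rcases Nat.lt_or_ge p.2 2 with h | h
        · exfalso
          have : p = p0 := hna p hp' p0 hp0 (Or.inr (by omega))
          exact (Finset.ne_of_mem_erase hp) this
        · exact h
      refine ⟨⟨(R.erase p0).image unshiftC, p0.1⟩, ?_, ?_⟩
      · rw [Finset.mem_coe, Finset.mem_sigma]
        constructor
        · exact unshift_plc (fun p hp => hsub (Finset.mem_of_mem_erase hp))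
            (fun p hp q hq h => hna p (Finset.mem_of_mem_erase hp) q
              (Finset.mem_of_mem_erase hq) h) h2
        · rw [freeRows, Finset.mem_sdiff]
          constructor
          · obtain ⟨ha, hb, hc⟩ := mem_stair.mp (hsub hp0)
            rw [Finset.mem_Icc]
            show 1 ≤ p0.1 ∧ p0.1 ≤ n
            omega
          · intro hrow
            rw [rows, Finset.image_image] at hrow
            obtain ⟨q, hq, hq1⟩ := Finset.mem_image.mp hrow
            have : q = p0 := hna q (Finset.mem_of_mem_erase hq) p0 hp0
              (Or.inl (by simpa [unshiftC] using hq1))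
            exact (Finset.ne_of_mem_erase hq) this
      · show insert (p0.1, 1) (((R.erase p0).image unshiftC).image shiftC) = R
        rw [image_shift_unshift h2]
        have : (p0.1, 1) = p0 := by
          ext
          · rfl
          · exact hp01.symm
        rw [this, Finset.insert_erase hp0]
    · intro _ _; rfl

lemma sum_pow_filter_lt (s : Finset ℕ) :
    ∑ x ∈ s, (Polynomial.X : Polynomial ℤ) ^ (s.filter fun y => x < y).card =
      ∑ i ∈ Finset.range s.card, (Polynomial.X : Polynomial ℤ) ^ i := by
  induction s using Finset.strongInduction with
  | _ s ih =>
    rcases s.eq_empty_or_nonempty with rfl | hs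
    · simp
    · have hm := s.min'_mem hs
      set m := s.min' hs with hmdef
      have hrw : s = insert m (s.erase m) := (Finset.insert_erase hm).symm
      have hcard : s.card = (s.erase m).card + 1 := by
        rw [Finset.card_erase_of_mem hm]
        have := Finset.card_pos.mpr hs
        omega
      have hfm : s.filter (fun y => m < y) = s.erase m := by
        ext x
        simp only [Finset.mem_filter, Finset.mem_erase]
        constructor
        · rintro ⟨hx, hlt⟩; exact ⟨by omega, hx⟩
        · rintro ⟨hne, hx⟩
          exact ⟨hx, lt_of_le_of_ne (s.min'_le x hx) (Ne.symm hne)⟩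
      have key : ∀ x ∈ s.erase m,
          (s.filter fun y => x < y) = ((s.erase m).filter fun y => x < y) := by
        intro x hx
        have hxm : ¬ x < m := not_lt.mpr (s.min'_le x (Finset.mem_of_mem_erase hx))
        rw [Finset.filter_erase]
        rw [Finset.erase_eq_of_notMem]
        simp only [Finset.mem_filter]
        tauto
      calc ∑ x ∈ s, (Polynomial.X : Polynomial ℤ) ^ (s.filter fun y => x < y).card
          = (Polynomial.X : Polynomial ℤ) ^ (s.filter fun y => m < y).card +
            ∑ x ∈ s.erase m, (Polynomial.X : Polynomial ℤ) ^ (s.filter fun y => x < y).card := by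
            rw [hrw]
            rw [Finset.sum_insert (Finset.notMem_erase m s), ← hrw]
        _ = (Polynomial.X : Polynomial ℤ) ^ (s.erase m).card +
            ∑ x ∈ s.erase m,
              (Polynomial.X : Polynomial ℤ) ^ ((s.erase m).filter fun y => x < y).card := by
            rw [hfm]
            congr 1
            exact Finset.sum_congr rfl fun x hx => by rw [key x hx]
        _ = (Polynomial.X : Polynomial ℤ) ^ (s.erase m).card +
            ∑ i ∈ Finset.range (s.erase m).card, (Polynomial.X : Polynomial ℤ) ^ i := by
            rw [ih (s.erase m) (Finset.erase_ssubset hm)]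
        _ = ∑ i ∈ Finset.range s.card, (Polynomial.X : Polynomial ℤ) ^ i := by
            rw [hcard, Finset.sum_range_succ]
            ring

lemma stair_zero : stair 0 = ∅ := by
  ext p
  simp only [mem_stair, Finset.notMem_empty, iff_false]
  omega

lemma plc_zero : plc 0 = {∅} := by
  apply Finset.eq_singleton_iff_unique_mem.mpr
  constructor
  · rw [mem_plc]
    exact ⟨by simp, by intro p hp; simp at hp⟩
  · intro R hR
    have := (mem_plc.mp hR).1
    rw [stair_zero] at this
    exact Finset.subset_empty.mp this

lemma GR_zero : GRcount 0 ∅ = 0 := by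
  rw [GRcount, stair_zero]
  simp

lemma key_stirling (n : ℕ) : ∀ k,
    ∑ R ∈ (plc n).filter (fun R => R.card + k = n),
        (Polynomial.X : Polynomial ℤ) ^ GRcount n R = qStirling n k := by
  induction n with
  | zero =>
    intro k
    cases k with
    | zero =>
      rw [plc_zero,
        show Finset.filter (fun R => R.card + 0 = 0) ({∅} : Finset (Finset (ℕ × ℕ))) = {∅} from
          by rw [Finset.filter_singleton]; simp,
        Finset.sum_singleton, GR_zero, pow_zero]
      rfl
    | succ k =>
      rw [plc_zero,
        show Finset.filter (fun R => R.card + (k + 1) = 0) ({∅} : Finset (Finset (ℕ × ℕ))) = ∅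
          from by simp]
      simp [qStirling]
  | succ n ih =>
    intro k
    rw [Finset.sum_filter]
    rw [plc_succ_sum n
      (fun R => if R.card + k = n + 1 then (Polynomial.X : Polynomial ℤ) ^ GRcount (n + 1) R else 0)]
    have step : ∀ R' ∈ plc n,
        ((if (R'.image shiftC).card + k = n + 1 then
            (Polynomial.X : Polynomial ℤ) ^ GRcount (n + 1) (R'.image shiftC) else 0) +
          ∑ r0 ∈ freeRows n R',
            (if (insert (r0, 1) (R'.image shiftC)).card + k = n + 1 then
              (Polynomial.X : Polynomial ℤ) ^ GRcount (n + 1) (insert (r0, 1) (R'.image shiftC))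
              else 0)) =
        ((if R'.card + k = n + 1 then
            Polynomial.X ^ (n - R'.card) * (Polynomial.X : Polynomial ℤ) ^ GRcount n R' else 0) +
          (if R'.card + 1 + k = n + 1 then
            (∑ i ∈ Finset.range (n - R'.card), (Polynomial.X : Polynomial ℤ) ^ i) *
              Polynomial.X ^ GRcount n R' else 0)) := by
      intro R' hR'
      obtain ⟨hsub, hna⟩ := mem_plc.mp hR'
      have hci : (R'.image shiftC).card = R'.card :=
        Finset.card_image_of_injective _ shiftC_inj
      congr 1
      · rw [hci, GR_caseA hsub hna, pow_add]
      · have hstep2 : ∀ r0 ∈ freeRows n R',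
            (if (insert (r0, 1) (R'.image shiftC)).card + k = n + 1 then
              (Polynomial.X : Polynomial ℤ) ^ GRcount (n + 1) (insert (r0, 1) (R'.image shiftC))
              else 0) =
            (if R'.card + 1 + k = n + 1 then
              (Polynomial.X : Polynomial ℤ) ^
                (((freeRows n R').filter fun y => r0 < y).card + GRcount n R') else 0) := by
          intro r0 hr0
          rw [Finset.card_insert_of_notMem (notMem_image_shift (snd_pos_of_subset hsub) r0),
            hci, GR_caseB hsub hna hr0]
        rw [Finset.sum_congr rfl hstep2]
        by_cases hc : R'.card + 1 + k = n + 1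
        · simp only [if_pos hc]
          calc ∑ r0 ∈ freeRows n R', (Polynomial.X : Polynomial ℤ) ^
                (((freeRows n R').filter fun y => r0 < y).card + GRcount n R')
              = ∑ r0 ∈ freeRows n R', (Polynomial.X : Polynomial ℤ) ^
                  ((freeRows n R').filter fun y => r0 < y).card *
                    Polynomial.X ^ GRcount n R' :=
                Finset.sum_congr rfl fun r0 _ => pow_add _ _ _
            _ = (∑ r0 ∈ freeRows n R', (Polynomial.X : Polynomial ℤ) ^
                  ((freeRows n R').filter fun y => r0 < y).card) *
                    Polynomial.X ^ GRcount n R' := (Finset.sum_mul _ _ _).symm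
            _ = (∑ i ∈ Finset.range (freeRows n R').card, (Polynomial.X : Polynomial ℤ) ^ i) *
                    Polynomial.X ^ GRcount n R' := by rw [sum_pow_filter_lt]
            _ = (∑ i ∈ Finset.range (n - R'.card), (Polynomial.X : Polynomial ℤ) ^ i) *
                    Polynomial.X ^ GRcount n R' := by rw [card_freeRows hsub hna]
        · simp only [if_neg hc, Finset.sum_const_zero]
    rw [Finset.sum_congr rfl step, Finset.sum_add_distrib]
    cases k with
    | zero =>
      have h1 : ∀ R' ∈ plc n,
          (if R'.card + 0 = n + 1 then
            Polynomial.X ^ (n - R'.card) * (Polynomial.X : Polynomial ℤ) ^ GRcount n R' else 0)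
            = 0 := by
        intro R' hR'
        obtain ⟨hsub, hna⟩ := mem_plc.mp hR'
        have := card_plc_le hsub hna
        rw [if_neg (by omega)]
      have h2 : ∀ R' ∈ plc n,
          (if R'.card + 1 + 0 = n + 1 then
            (∑ i ∈ Finset.range (n - R'.card), (Polynomial.X : Polynomial ℤ) ^ i) *
              Polynomial.X ^ GRcount n R' else 0) = 0 := by
        intro R' hR'
        by_cases hc : R'.card + 1 + 0 = n + 1
        · rw [if_pos hc, show n - R'.card = 0 by omega]
          simp
        · rw [if_neg hc]
      rw [Finset.sum_congr rfl h1, Finset.sum_congr rfl h2]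
      simp [qStirling]
    | succ k' =>
      have hA : ∑ R' ∈ plc n,
          (if R'.card + (k' + 1) = n + 1 then
            Polynomial.X ^ (n - R'.card) * (Polynomial.X : Polynomial ℤ) ^ GRcount n R' else 0)
          = Polynomial.X ^ k' * qStirling n k' := by
        have hr : Polynomial.X ^ k' * qStirling n k' =
            ∑ R' ∈ plc n, (if R'.card + k' = n then
              Polynomial.X ^ k' * (Polynomial.X : Polynomial ℤ) ^ GRcount n R' else 0) := by
          rw [← ih k', Finset.mul_sum, Finset.sum_filter]
        rw [hr]
        apply Finset.sum_congr rfl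
        intro R' _
        by_cases h : R'.card + k' = n
        · rw [if_pos (by omega), if_pos h, show n - R'.card = k' by omega]
        · rw [if_neg (by omega), if_neg h]
      have hB : ∑ R' ∈ plc n,
          (if R'.card + 1 + (k' + 1) = n + 1 then
            (∑ i ∈ Finset.range (n - R'.card), (Polynomial.X : Polynomial ℤ) ^ i) *
              Polynomial.X ^ GRcount n R' else 0)
          = (∑ i ∈ Finset.range (k' + 1), (Polynomial.X : Polynomial ℤ) ^ i) *
              qStirling n (k' + 1) := by
        have hr : (∑ i ∈ Finset.range (k' + 1), (Polynomial.X : Polynomial ℤ) ^ i) *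
            qStirling n (k' + 1) =
            ∑ R' ∈ plc n, (if R'.card + (k' + 1) = n then
              (∑ i ∈ Finset.range (k' + 1), (Polynomial.X : Polynomial ℤ) ^ i) *
                Polynomial.X ^ GRcount n R' else 0) := by
          rw [← ih (k' + 1), Finset.mul_sum, Finset.sum_filter]
        rw [hr]
        apply Finset.sum_congr rfl
        intro R' _
        by_cases h : R'.card + (k' + 1) = n
        · rw [if_pos (by omega), if_pos h, show n - R'.card = k' + 1 by omega]
        · rw [if_neg (by omega), if_neg h]
      rw [hA, hB]
      rfl


/-- `B_n(q) = Σ_R q^{GR_n(R)}` over non-attacking rook placements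
`R` on the staircase `Stair_n`. -/
theorem qBell_eq_sum_rook (n : ℕ) :
    qBell n =
      ∑ R ∈ (stair n).powerset.filter
          (fun R => ∀ p ∈ R, ∀ q ∈ R, (p.1 = q.1 ∨ p.2 = q.2) → p = q),
        Polynomial.X ^ GRcount n R := by
  show qBell n = ∑ R ∈ plc n, (Polynomial.X : Polynomial ℤ) ^ GRcount n R
  rw [qBell]
  have h1 : ∀ k ∈ Finset.range (n + 1), qStirling n k =
      ∑ R ∈ plc n, (if R.card + k = n then (Polynomial.X : Polynomial ℤ) ^ GRcount n R else 0) :=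
    fun k _ => by rw [← key_stirling n k, Finset.sum_filter]
  rw [Finset.sum_congr rfl h1, Finset.sum_comm]
  apply Finset.sum_congr rfl
  intro R hR
  obtain ⟨hsub, hna⟩ := mem_plc.mp hR
  have hcard := card_plc_le hsub hna
  rw [Finset.sum_eq_single_of_mem (n - R.card) (Finset.mem_range.mpr (by omega))
    (fun b _ hbne => by rw [if_neg (by omega)])]
  rw [if_pos (by omega)]

end
end

section
/- Let f ∈ Z[x_1, x_2, ...] be nonzero with leading monomial x^α (in tail lexicographic order: x^α > x^γ iff there exists k with α_k > γ_k and α_j = γ_j for all j > k) having coefficient c ≠ 0. Let i be an index with α_i > α_{i+1}, and suppose every monomial x^γ appearing in f satisfies γ_i ≤ α_i. Then the polynomial π_i(x_{i+1} f), where π_i(g) = (x_i g − s_i(x_i g))/(x_i − x_{i+1}) and s_i swaps x_i and x_{i+1}, has leading monomial x_i · x^{s_i α} with coefficient c. -/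
open scoped Classical

noncomputable section

namespace Lead19

open MvPolynomial

/-- `ρ` with positions `i`, `i+1` set to `a`, `b` (assuming `ρ i = ρ (i+1) = 0`). -/
noncomputable def upd2 (i : ℕ) (ρ : ℕ →₀ ℕ) (a b : ℕ) : ℕ →₀ ℕ :=
  ρ + Finsupp.single i a + Finsupp.single (i + 1) b

lemma upd2_apply_i (i : ℕ) (ρ : ℕ →₀ ℕ) (a b : ℕ) (h1 : ρ i = 0) :
    upd2 i ρ a b i = a := by
  simp [upd2, Finsupp.add_apply, h1, Finsupp.single_eq_same,
    Finsupp.single_eq_of_ne (Nat.succ_ne_self i)]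

lemma upd2_apply_succ (i : ℕ) (ρ : ℕ →₀ ℕ) (a b : ℕ) (h2 : ρ (i + 1) = 0) :
    upd2 i ρ a b (i + 1) = b := by
  simp [upd2, Finsupp.add_apply, h2, Finsupp.single_eq_same,
    Finsupp.single_eq_of_ne (Nat.succ_ne_self i).symm]

lemma upd2_apply_other (i : ℕ) (ρ : ℕ →₀ ℕ) (a b j : ℕ) (hj1 : j ≠ i) (hj2 : j ≠ i + 1) :
    upd2 i ρ a b j = ρ j := by
  simp [upd2, Finsupp.add_apply, Finsupp.single_eq_of_ne' (Ne.symm hj1),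
    Finsupp.single_eq_of_ne' (Ne.symm hj2)]

lemma upd2_swap (i : ℕ) (ρ : ℕ →₀ ℕ) (a b : ℕ) (h1 : ρ i = 0) (h2 : ρ (i + 1) = 0) :
    Finsupp.equivMapDomain (Equiv.swap i (i + 1)) (upd2 i ρ a b) = upd2 i ρ b a := by
  ext j
  rw [Finsupp.equivMapDomain_apply, Equiv.symm_swap]
  rcases eq_or_ne j i with rfl | hj1
  · rw [Equiv.swap_apply_left, upd2_apply_succ _ _ _ _ h2, upd2_apply_i _ _ _ _ h1]
  rcases eq_or_ne j (i + 1) with rfl | hj2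
  · rw [Equiv.swap_apply_right, upd2_apply_i _ _ _ _ h1, upd2_apply_succ _ _ _ _ h2]
  · rw [Equiv.swap_apply_of_ne_of_ne hj1 hj2, upd2_apply_other _ _ _ _ _ hj1 hj2,
      upd2_apply_other _ _ _ _ _ hj1 hj2]

lemma upd2_decomp (i : ℕ) (δ : ℕ →₀ ℕ) :
    ∃ ρ : ℕ →₀ ℕ, ρ i = 0 ∧ ρ (i + 1) = 0 ∧ δ = upd2 i ρ (δ i) (δ (i + 1)) := by
  refine ⟨(δ.erase i).erase (i + 1), ?_, ?_, ?_⟩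
  · rw [Finsupp.erase_ne (by omega : i ≠ i + 1), Finsupp.erase_same]
  · exact Finsupp.erase_same
  · ext j
    rcases eq_or_ne j i with rfl | hj1
    · rw [upd2_apply_i]
      rw [Finsupp.erase_ne (by omega : j ≠ j + 1), Finsupp.erase_same]
    rcases eq_or_ne j (i + 1) with rfl | hj2
    · rw [upd2_apply_succ]
      exact Finsupp.erase_same
    · rw [upd2_apply_other _ _ _ _ _ hj1 hj2, Finsupp.erase_ne hj2, Finsupp.erase_ne hj1]

lemma upd2_addX_i (i : ℕ) (ρ : ℕ →₀ ℕ) (a b : ℕ) :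
    Finsupp.single i 1 + upd2 i ρ a b = upd2 i ρ (a + 1) b := by
  unfold upd2
  rw [Finsupp.single_add]
  abel

lemma upd2_addX_succ (i : ℕ) (ρ : ℕ →₀ ℕ) (a b : ℕ) :
    Finsupp.single (i + 1) 1 + upd2 i ρ a b = upd2 i ρ a (b + 1) := by
  unfold upd2
  rw [Finsupp.single_add]
  abel

lemma coeff_X_mul_zero (i : ℕ) (s : ℕ) (p : MvPolynomial ℕ ℤ) (μ : ℕ →₀ ℕ) (h : μ s = 0) :
    MvPolynomial.coeff μ (MvPolynomial.X s * p) = 0 := by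
  rw [MvPolynomial.coeff_X_mul']
  simp [Finsupp.mem_support_iff, h]

/-- The fundamental coefficient formula derived from the defining equation. -/
lemma coeff_formula (i : ℕ) (g P : MvPolynomial ℕ ℤ)
    (hP : (MvPolynomial.X i - MvPolynomial.X (i + 1)) * P
        = MvPolynomial.X i * MvPolynomial.X (i + 1) * g) :
    ∀ (b a : ℕ) (ρ : ℕ →₀ ℕ), ρ i = 0 → ρ (i + 1) = 0 →
      P.coeff (upd2 i ρ a b)
        = ∑ t ∈ Finset.range b, g.coeff (upd2 i ρ (a + t) (b - 1 - t)) := by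
  intro b
  induction b with
  | zero =>
      intro a ρ h1 h2
      have h := congrArg (MvPolynomial.coeff (upd2 i ρ (a + 1) 0)) hP
      rw [sub_mul, MvPolynomial.coeff_sub, mul_assoc, ← upd2_addX_i,
        MvPolynomial.coeff_X_mul, MvPolynomial.coeff_X_mul,
        coeff_X_mul_zero i (i + 1) P _ (by
          simp [Finsupp.add_apply, upd2_apply_succ _ _ _ _ h2,
            Finsupp.single_eq_of_ne (Nat.succ_ne_self i).symm]),
        coeff_X_mul_zero i (i + 1) g _ (by rw [upd2_apply_succ _ _ _ _ h2])] at h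
      simpa using h
  | succ b ih =>
      intro a ρ h1 h2
      have h := congrArg (MvPolynomial.coeff (upd2 i ρ (a + 1) (b + 1))) hP
      rw [sub_mul, MvPolynomial.coeff_sub, mul_assoc] at h
      have e1 : upd2 i ρ (a + 1) (b + 1) = Finsupp.single i 1 + upd2 i ρ a (b + 1) :=
        (upd2_addX_i i ρ a (b + 1)).symm
      have e2 : upd2 i ρ (a + 1) (b + 1) = Finsupp.single (i + 1) 1 + upd2 i ρ (a + 1) b :=
        (upd2_addX_succ i ρ (a + 1) b).symm
      have e3 : upd2 i ρ a (b + 1) = Finsupp.single (i + 1) 1 + upd2 i ρ a b :=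
        (upd2_addX_succ i ρ a b).symm
      have hL1 : MvPolynomial.coeff (upd2 i ρ (a + 1) (b + 1)) (MvPolynomial.X i * P)
          = P.coeff (upd2 i ρ a (b + 1)) := by
        rw [e1, MvPolynomial.coeff_X_mul]
      have hL2 : MvPolynomial.coeff (upd2 i ρ (a + 1) (b + 1)) (MvPolynomial.X (i + 1) * P)
          = P.coeff (upd2 i ρ (a + 1) b) := by
        rw [e2, MvPolynomial.coeff_X_mul]
      have hR : MvPolynomial.coeff (upd2 i ρ (a + 1) (b + 1))
            (MvPolynomial.X i * (MvPolynomial.X (i + 1) * g))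
          = g.coeff (upd2 i ρ a b) := by
        rw [e1, MvPolynomial.coeff_X_mul, e3, MvPolynomial.coeff_X_mul]
      rw [hL1, hL2, hR] at h
      have hih := ih (a + 1) ρ h1 h2
      rw [Finset.sum_range_succ']
      have hterm : ∀ t ∈ Finset.range b,
          g.coeff (upd2 i ρ (a + (t + 1)) (b + 1 - 1 - (t + 1)))
            = g.coeff (upd2 i ρ (a + 1 + t) (b - 1 - t)) := by
        intro t _
        have h4 : a + (t + 1) = a + 1 + t := by omega
        have h5 : b + 1 - 1 - (t + 1) = b - 1 - t := by omega
        rw [h4, h5]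
      rw [Finset.sum_congr rfl hterm]
      have h6 : a + 0 = a := by omega
      have h7 : b + 1 - 1 - 0 = b := by omega
      rw [h6, h7, ← hih]
      omega
      

lemma coeff_rename_equiv (e : ℕ ≃ ℕ) (f : MvPolynomial ℕ ℤ) (d : ℕ →₀ ℕ) :
    MvPolynomial.coeff d (MvPolynomial.rename e f)
      = MvPolynomial.coeff (Finsupp.equivMapDomain e.symm d) f := by
  have hd : d = Finsupp.mapDomain e (Finsupp.equivMapDomain e.symm d) := by
    rw [← Finsupp.equivMapDomain_eq_mapDomain]
    ext j
    simp [Finsupp.equivMapDomain_apply]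
  conv_lhs => rw [hd]
  rw [MvPolynomial.coeff_rename_mapDomain _ e.injective]

lemma sym_of_eq (i : ℕ) (f P : MvPolynomial ℕ ℤ)
    (hP : (MvPolynomial.X i - MvPolynomial.X (i + 1)) * P
        = MvPolynomial.X i * MvPolynomial.X (i + 1) *
            (f - MvPolynomial.rename (Equiv.swap i (i + 1)) f)) :
    MvPolynomial.rename (Equiv.swap i (i + 1)) P = P := by
  have hX : (MvPolynomial.X i : MvPolynomial ℕ ℤ) - MvPolynomial.X (i + 1) ≠ 0 := by
    apply sub_ne_zero_of_ne
    intro h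
    exact absurd (MvPolynomial.X_injective h) (by omega)
  apply mul_left_cancel₀ hX
  have h2 := congrArg (MvPolynomial.rename (Equiv.swap i (i + 1))) hP
  simp only [map_mul, map_sub, MvPolynomial.rename_X] at h2
  rw [MvPolynomial.rename_rename] at h2
  have hcomp : (⇑(Equiv.swap i (i + 1)) ∘ ⇑(Equiv.swap i (i + 1))) = id := by
    funext x
    simp [Equiv.swap_apply_self]
  rw [hcomp, MvPolynomial.rename_id, AlgHom.id_apply] at h2
  rw [Equiv.swap_apply_left, Equiv.swap_apply_right] at h2
  rw [hP]
  linear_combination -h2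

lemma not_tailLt (α μ : ℕ →₀ ℕ) (i : ℕ) (h1 : α (i + 1) < μ (i + 1))
    (h2 : ∀ j, i + 1 < j → μ j = α j) : ¬ TailLt μ α := by
  rintro ⟨k, hk, hag⟩
  rcases lt_trichotomy k (i + 1) with h | rfl | h
  · exact absurd (hag (i + 1) h) (by omega)
  · omega
  · rw [h2 k h] at hk
    omega

end Lead19


/-- if `f` has leading monomial `x^α` (tail lex) with coefficient
`c`, `α_i > α_{i+1}`, and all monomials of `f` have `x_i`-power at most `α_i`,
then `π_i(x_{i+1} f)` has leading monomial `x_i x^{s_i α}` with coefficient `c`.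
Here `π_i(x_{i+1} f)` is characterized as the polynomial `P` with
`(x_i - x_{i+1}) P = x_i x_{i+1} (f - s_i f)`. -/
theorem leading_monomial_pi_operator (f : MvPolynomial ℕ ℤ) (α : ℕ →₀ ℕ) (c : ℤ)
    (i : ℕ) (hf : f ≠ 0) (hc : c ≠ 0) (hcoeff : f.coeff α = c)
    (hlead : ∀ γ, f.coeff γ ≠ 0 → γ ≠ α → TailLt γ α)
    (hgt : α (i + 1) < α i)
    (hbound : ∀ γ, f.coeff γ ≠ 0 → γ i ≤ α i) :
    ∀ P : MvPolynomial ℕ ℤ,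
      (MvPolynomial.X i - MvPolynomial.X (i + 1)) * P =
        MvPolynomial.X i * MvPolynomial.X (i + 1) *
          (f - MvPolynomial.rename (Equiv.swap i (i + 1)) f) →
      P.coeff (Finsupp.equivMapDomain (Equiv.swap i (i + 1)) α + Finsupp.single i 1) = c ∧
      ∀ γ, P.coeff γ ≠ 0 →
        γ ≠ Finsupp.equivMapDomain (Equiv.swap i (i + 1)) α + Finsupp.single i 1 →
        TailLt γ (Finsupp.equivMapDomain (Equiv.swap i (i + 1)) α + Finsupp.single i 1) := by
  classical
  intro P hP
  obtain ⟨ρ, hρ1, hρ2, hα⟩ := Lead19.upd2_decomp i α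
  have hρα : ∀ j, j ≠ i → j ≠ i + 1 → ρ j = α j := by
    intro j h1 h2
    conv_rhs => rw [hα]
    rw [Lead19.upd2_apply_other _ _ _ _ _ h1 h2]
  have hβ : Finsupp.equivMapDomain (Equiv.swap i (i + 1)) α + Finsupp.single i 1
      = Lead19.upd2 i ρ (α (i + 1) + 1) (α i) := by
    conv_lhs => rw [hα]
    rw [Lead19.upd2_swap _ _ _ _ hρ1 hρ2,
      add_comm (Lead19.upd2 i ρ (α (i + 1)) (α i)) (Finsupp.single i 1),
      Lead19.upd2_addX_i]
  have hsymP : MvPolynomial.rename (Equiv.swap i (i + 1)) P = P := Lead19.sym_of_eq i f P hP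
  set g : MvPolynomial ℕ ℤ := f - MvPolynomial.rename (Equiv.swap i (i + 1)) f with hg
  have hform := Lead19.coeff_formula i g P hP
  have hsymco : ∀ d : ℕ →₀ ℕ, P.coeff d
      = P.coeff (Finsupp.equivMapDomain (Equiv.swap i (i + 1)) d) := by
    intro d
    conv_lhs => rw [← hsymP]
    rw [Lead19.coeff_rename_equiv, Equiv.symm_swap]
  have hgco : ∀ (σ : ℕ →₀ ℕ), σ i = 0 → σ (i + 1) = 0 → ∀ u v,
      g.coeff (Lead19.upd2 i σ u v)
        = f.coeff (Lead19.upd2 i σ u v) - f.coeff (Lead19.upd2 i σ v u) := by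
    intro σ h1 h2 u v
    rw [hg, MvPolynomial.coeff_sub, Lead19.coeff_rename_equiv, Equiv.symm_swap,
      Lead19.upd2_swap _ _ _ _ h1 h2]
  have hvan : ∀ μ : ℕ →₀ ℕ, α (i + 1) < μ (i + 1) → (∀ j, i + 1 < j → μ j = α j) →
      f.coeff μ = 0 := by
    intro μ hm1 hm2
    by_contra hne0
    have hne : μ ≠ α := by
      intro hEq
      rw [hEq] at hm1
      omega
    exact Lead19.not_tailLt α μ i hm1 hm2 (hlead μ hne0 hne)
  have hbound' : ∀ μ : ℕ →₀ ℕ, α i < μ i → f.coeff μ = 0 := by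
    intro μ hm
    by_contra hne0
    exact absurd (hbound μ hne0) (by omega)
  have hC1 : P.coeff (Lead19.upd2 i ρ (α (i + 1) + 1) (α i)) = c := by
    rw [hsymco, Lead19.upd2_swap _ _ _ _ hρ1 hρ2,
      hform (α (i + 1) + 1) (α i) ρ hρ1 hρ2]
    rw [Finset.sum_eq_single 0]
    · rw [hgco ρ hρ1 hρ2]
      have h0 : α (i + 1) + 1 - 1 - 0 = α (i + 1) := by omega
      have h0' : α i + 0 = α i := by omega
      rw [h0, h0']
      have hz : f.coeff (Lead19.upd2 i ρ (α (i + 1)) (α i)) = 0 := by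
        apply hvan
        · rw [Lead19.upd2_apply_succ _ _ _ _ hρ2]
          omega
        · intro j hj
          rw [Lead19.upd2_apply_other _ _ _ _ _ (by omega) (by omega),
            hρα j (by omega) (by omega)]
      rw [hz, ← hα, hcoeff, sub_zero]
    · intro t _ ht0
      rw [hgco ρ hρ1 hρ2]
      have hz1 : f.coeff (Lead19.upd2 i ρ (α i + t) (α (i + 1) + 1 - 1 - t)) = 0 := by
        apply hbound'
        rw [Lead19.upd2_apply_i _ _ _ _ hρ1]
        omega
      have hz2 : f.coeff (Lead19.upd2 i ρ (α (i + 1) + 1 - 1 - t) (α i + t)) = 0 := by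
        apply hvan
        · rw [Lead19.upd2_apply_succ _ _ _ _ hρ2]
          omega
        · intro j hj
          rw [Lead19.upd2_apply_other _ _ _ _ _ (by omega) (by omega),
            hρα j (by omega) (by omega)]
      rw [hz1, hz2, sub_zero]
    · intro h
      exact absurd (Finset.mem_range.mpr (by omega)) h
  refine ⟨by rw [hβ]; exact hC1, ?_⟩
  intro δ hδ0 hδβ
  rw [hβ] at hδβ ⊢
  obtain ⟨σ, hσ1, hσ2, hδeq⟩ := Lead19.upd2_decomp i δ
  set d1 := δ i with hd1
  set d2 := δ (i + 1) with hd2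
  rw [hδeq] at hδβ ⊢
  have hMne : P.coeff (Lead19.upd2 i σ (max d1 d2) (min d1 d2)) ≠ 0 := by
    rcases le_total d2 d1 with h | h
    · rw [max_eq_left h, min_eq_right h, ← hδeq]
      exact hδ0
    · rw [max_eq_right h, min_eq_left h,
        ← Lead19.upd2_swap i σ d1 d2 hσ1 hσ2, ← hδeq, ← hsymco]
      exact hδ0
  rw [hform (min d1 d2) (max d1 d2) σ hσ1 hσ2] at hMne
  obtain ⟨t, ht, htne⟩ := Finset.exists_ne_zero_of_sum_ne_zero hMne
  rw [Finset.mem_range] at ht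
  set u := max d1 d2 + t with hu
  set v := min d1 d2 - 1 - t with hv
  rw [hgco σ hσ1 hσ2 u v] at htne
  have hterm : f.coeff (Lead19.upd2 i σ u v) ≠ 0 ∨ f.coeff (Lead19.upd2 i σ v u) ≠ 0 := by
    by_contra hcon
    push_neg at hcon
    rw [hcon.1, hcon.2] at htne
    simp at htne
  have hvu : v < u := by omega
  have hd1v : v < d1 := by omega
  have hd1u : d1 ≤ u := by omega
  have hd2v : v < d2 := by omega
  have hd2u : d2 ≤ u := by omega
  have hsum : d1 + d2 = u + v + 1 := by omega
  have hγ : ∃ γ : ℕ →₀ ℕ, f.coeff γ ≠ 0 ∧ (∀ j, j ≠ i → j ≠ i + 1 → γ j = σ j) ∧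
      ((γ i = u ∧ γ (i + 1) = v) ∨ (γ i = v ∧ γ (i + 1) = u)) := by
    rcases hterm with h | h
    · exact ⟨_, h, fun j h1 h2 => Lead19.upd2_apply_other _ _ _ _ _ h1 h2,
        Or.inl ⟨Lead19.upd2_apply_i _ _ _ _ hσ1, Lead19.upd2_apply_succ _ _ _ _ hσ2⟩⟩
    · exact ⟨_, h, fun j h1 h2 => Lead19.upd2_apply_other _ _ _ _ _ h1 h2,
        Or.inr ⟨Lead19.upd2_apply_i _ _ _ _ hσ1, Lead19.upd2_apply_succ _ _ _ _ hσ2⟩⟩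
  obtain ⟨γ, hγ0, hγoff, horient⟩ := hγ
  by_cases hγα : γ = α
  · have hgi : γ i = α i := by rw [hγα]
    have hgs : γ (i + 1) = α (i + 1) := by rw [hγα]
    have hAor : γ i = u ∧ γ (i + 1) = v := by
      rcases horient with h | h
      · exact h
      · exfalso
        omega
    have hoff : ∀ j, j ≠ i → j ≠ i + 1 → σ j = ρ j := by
      intro j h1 h2
      rw [← hγoff j h1 h2, hγα, hρα j h1 h2]
    have hu' : u = α i := by omega
    have hv' : v = α (i + 1) := by omega
    rcases Nat.lt_or_ge d2 (α i) with hlt | hge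
    · refine ⟨i + 1, ?_, ?_⟩
      · rw [Lead19.upd2_apply_succ _ _ _ _ hσ2, Lead19.upd2_apply_succ _ _ _ _ hρ2]
        omega
      · intro j hj
        rw [Lead19.upd2_apply_other _ _ _ _ _ (by omega) (by omega),
          Lead19.upd2_apply_other _ _ _ _ _ (by omega) (by omega)]
        exact hoff j (by omega) (by omega)
    · exfalso
      apply hδβ
      have hd2' : d2 = α i := by omega
      have hd1' : d1 = α (i + 1) + 1 := by omega
      ext j
      rcases eq_or_ne j i with rfl | hj1
      · rw [Lead19.upd2_apply_i _ _ _ _ hσ1, Lead19.upd2_apply_i _ _ _ _ hρ1]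
        omega
      rcases eq_or_ne j (i + 1) with rfl | hj2
      · rw [Lead19.upd2_apply_succ _ _ _ _ hσ2, Lead19.upd2_apply_succ _ _ _ _ hρ2]
        omega
      · rw [Lead19.upd2_apply_other _ _ _ _ _ hj1 hj2,
          Lead19.upd2_apply_other _ _ _ _ _ hj1 hj2]
        exact hoff j hj1 hj2
  · obtain ⟨k, hk, hag⟩ := hlead γ hγ0 hγα
    rcases Nat.lt_or_ge (i + 1) k with hik | hik
    · refine ⟨k, ?_, ?_⟩
      · rw [Lead19.upd2_apply_other _ _ _ _ _ (by omega) (by omega),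
          Lead19.upd2_apply_other _ _ _ _ _ (by omega) (by omega),
          ← hγoff k (by omega) (by omega), hρα k (by omega) (by omega)]
        exact hk
      · intro j hj
        rw [Lead19.upd2_apply_other _ _ _ _ _ (by omega) (by omega),
          Lead19.upd2_apply_other _ _ _ _ _ (by omega) (by omega),
          ← hγoff j (by omega) (by omega), hρα j (by omega) (by omega)]
        exact hag j hj
    · have hagh : ∀ j, i + 1 < j → γ j = α j := fun j hj => hag j (by omega)
      have hγs : γ (i + 1) ≤ α (i + 1) := by
        rcases eq_or_ne k (i + 1) with rfl | h
        · omega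
        · rw [hag (i + 1) (by omega)]
      have hui : u ≤ α i := by
        rcases horient with h | h
        · have := hbound γ hγ0
          omega
        · omega
      have hoff2 : ∀ j, i + 1 < j → σ j = ρ j := by
        intro j hj
        rw [← hγoff j (by omega) (by omega), hagh j hj, hρα j (by omega) (by omega)]
      rcases Nat.lt_or_ge d2 (α i) with hlt | hge
      · refine ⟨i + 1, ?_, ?_⟩
        · rw [Lead19.upd2_apply_succ _ _ _ _ hσ2, Lead19.upd2_apply_succ _ _ _ _ hρ2]
          omega
        · intro j hj
          rw [Lead19.upd2_apply_other _ _ _ _ _ (by omega) (by omega),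
            Lead19.upd2_apply_other _ _ _ _ _ (by omega) (by omega)]
          exact hoff2 j hj
      · have hd2' : d2 = α i := by omega
        have hu' : u = α i := by omega
        have hA : γ i = u ∧ γ (i + 1) = v := by
          rcases horient with h | h
          · exact h
          · exfalso
            omega
        have hd1' : d1 = v + 1 := by omega
        rcases Nat.lt_or_ge v (α (i + 1)) with hv2 | hv2
        · refine ⟨i, ?_, ?_⟩
          · rw [Lead19.upd2_apply_i _ _ _ _ hσ1, Lead19.upd2_apply_i _ _ _ _ hρ1]
            omega
          · intro j hj
            rcases eq_or_ne j (i + 1) with rfl | hj2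
            · rw [Lead19.upd2_apply_succ _ _ _ _ hσ2, Lead19.upd2_apply_succ _ _ _ _ hρ2]
              omega
            · rw [Lead19.upd2_apply_other _ _ _ _ _ (by omega) hj2,
                Lead19.upd2_apply_other _ _ _ _ _ (by omega) hj2]
              exact hoff2 j (by omega)
        · have hv' : v = α (i + 1) := by omega
          have hki : k < i := by
            rcases Nat.lt_or_ge k i with h | h
            · exact h
            · exfalso
              rcases eq_or_ne k i with rfl | h2
              · omega
              · have hk1 : k = i + 1 := by omega
                subst hk1
                omega
          refine ⟨k, ?_, ?_⟩
          · rw [Lead19.upd2_apply_other _ _ _ _ _ (by omega) (by omega),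
              Lead19.upd2_apply_other _ _ _ _ _ (by omega) (by omega),
              ← hγoff k (by omega) (by omega), hρα k (by omega) (by omega)]
            exact hk
          · intro j hj
            rcases eq_or_ne j i with rfl | hj1
            · rw [Lead19.upd2_apply_i _ _ _ _ hσ1, Lead19.upd2_apply_i _ _ _ _ hρ1]
              omega
            rcases eq_or_ne j (i + 1) with rfl | hj2
            · rw [Lead19.upd2_apply_succ _ _ _ _ hσ2, Lead19.upd2_apply_succ _ _ _ _ hρ2]
              omega
            · rw [Lead19.upd2_apply_other _ _ _ _ _ hj1 hj2,
                Lead19.upd2_apply_other _ _ _ _ _ hj1 hj2,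
                ← hγoff j hj1 hj2, hag j (by omega), hρα j hj1 hj2]


end
end
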